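/- arXiv:2206.05611 — 6 statements merged into one kernel-verified Lean document; each statement's English description precedes it below -/
import Mathlib

section
/- Let k be a field of characteristic zero. Let R, T, U ∈ k[x2,x3] be nonzero homogeneous polynomials and let ℓ1, ℓ2, ℓ3 ∈ k[x2,x3] be pairwise independent linear forms (each nonzero homogeneous of degree 1, and no two of them proportional). Suppose that ℓ1^r R + ℓ2^t T + ℓ3^u U = 0 for some natural numbers r, t, u, and let d = r + deg R = t + deg T = u + deg U be the common total degree of the three summands. Then min{r, t, u} ≤ ⌊(2d+1)/3⌋. -/
open MvPolynomial

namespace MinExpAux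

variable {k : Type*} [Field k]

local notation "P" => MvPolynomial (Fin 2) k

lemma sum_eq_degree (s : Fin 2 →₀ ℕ) : (s.sum fun _ e => e) = s.degree := by
  rw [Finsupp.sum, Finsupp.degree_apply]

lemma deg2 (s : Fin 2 →₀ ℕ) : s.degree = s 0 + s 1 := by
  rw [Finsupp.degree_apply, Finset.sum_subset (Finset.subset_univ _)
    (fun x _ hx => Finsupp.notMem_support_iff.mp hx)]
  exact Fin.sum_univ_two s

lemma eq_zero_iff2 (s : Fin 2 →₀ ℕ) : s = 0 ↔ s 0 = 0 ∧ s 1 = 0 := by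
  constructor
  · rintro rfl; simp
  · rintro ⟨h0, h1⟩; ext j; fin_cases j <;> simpa

lemma coeff_pderiv (i : Fin 2) (f : P) (s : Fin 2 →₀ ℕ) :
    coeff s (pderiv i f) = ((s i + 1 : ℕ) : k) * coeff (s + Finsupp.single i 1) f := by
  induction f using MvPolynomial.induction_on' with
  | monomial u a =>
    rw [pderiv_monomial, coeff_monomial, coeff_monomial]
    by_cases h : u = s + Finsupp.single i 1
    · subst h
      have h1 : s + Finsupp.single i 1 - Finsupp.single i 1 = s := by
        ext j
        rw [Finsupp.tsub_apply, Finsupp.add_apply]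
        omega
      have h2 : (s + Finsupp.single i 1 : Fin 2 →₀ ℕ) i = s i + 1 := by
        rw [Finsupp.add_apply, Finsupp.single_apply, if_pos rfl]
      rw [if_pos h1, h2]
      simp only [if_true]; push_cast; ring
    · rw [if_neg h, mul_zero]
      by_cases h2 : u - Finsupp.single i 1 = s
      · have hui : u i = 0 := by
          by_contra hui
          apply h
          ext j
          have hj := DFunLike.congr_fun h2 j
          rw [Finsupp.tsub_apply] at hj
          rw [Finsupp.add_apply]
          by_cases hji : j = i
          · subst hji
            rw [Finsupp.single_apply, if_pos rfl] at hj ⊢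
            omega
          · have hz : (Finsupp.single i 1) j = 0 := by
              rw [Finsupp.single_apply, if_neg (fun hh => hji hh.symm)]
            rw [hz] at hj
            rw [hz]
            omega
        rw [if_pos h2, hui]
        simp
      · rw [if_neg h2]
  | add p q ihp ihq =>
    simp only [map_add, coeff_add, ihp, ihq, mul_add]


lemma degree_add_single (s : Fin 2 →₀ ℕ) (i : Fin 2) :
    (s + Finsupp.single i 1).degree = s.degree + 1 := by
  rw [deg2, deg2, Finsupp.add_apply, Finsupp.add_apply]
  fin_cases i <;> simp [Finsupp.single_apply] <;> omega

lemma totalDegree_pderiv_lt {i : Fin 2} {f : P} (h : pderiv i f ≠ 0) :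
    (pderiv i f).totalDegree < f.totalDegree := by
  have hkey : ∀ s ∈ (pderiv i f).support, (s.sum fun _ e => e) < f.totalDegree := by
    intro s hs
    have hc : coeff s (pderiv i f) ≠ 0 := mem_support_iff.mp hs
    rw [coeff_pderiv] at hc
    have hc2 : coeff (s + Finsupp.single i 1) f ≠ 0 := fun hz => hc (by rw [hz, mul_zero])
    have hle := le_totalDegree (mem_support_iff.mpr hc2)
    rw [sum_eq_degree, degree_add_single] at hle
    rw [sum_eq_degree]
    omega
  obtain ⟨s, hs⟩ := MvPolynomial.support_nonempty.mpr h
  have hpos : 0 < f.totalDegree := lt_of_le_of_lt (Nat.zero_le _) (hkey s hs)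
  rw [totalDegree]
  exact (Finset.sup_lt_iff hpos).mpr hkey

lemma eq_C_of_pderiv_eq_zero [CharZero k] {f : P} (h0 : pderiv 0 f = 0)
    (h1 : pderiv 1 f = 0) : f = C (coeff 0 f) := by
  have hsupp : ∀ s ∈ f.support, s = 0 := by
    intro s hs
    by_contra hne
    have hsor : s 0 ≠ 0 ∨ s 1 ≠ 0 := by
      by_contra hcon
      push_neg at hcon
      exact hne ((eq_zero_iff2 s).mpr ⟨hcon.1, hcon.2⟩)
    have hgen : ∀ i : Fin 2, s i ≠ 0 → pderiv i f ≠ 0 := by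
      intro i hi
      have hrec : s - Finsupp.single i 1 + Finsupp.single i 1 = s := by
        ext j
        rw [Finsupp.add_apply, Finsupp.tsub_apply]
        by_cases hj : j = i
        · subst hj; rw [Finsupp.single_apply, if_pos rfl]; omega
        · rw [Finsupp.single_apply, if_neg (fun hh => hj hh.symm)]; omega
      intro hz
      have := coeff_pderiv i f (s - Finsupp.single i 1)
      rw [hz, coeff_zero, hrec] at this
      have hne2 : (((s - Finsupp.single i 1 : Fin 2 →₀ ℕ) i + 1 : ℕ) : k) ≠ 0 :=
        Nat.cast_ne_zero.mpr (Nat.succ_ne_zero _)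
      exact (mul_ne_zero hne2 (mem_support_iff.mp hs)) this.symm
    rcases hsor with hi | hi
    · exact hgen 0 hi h0
    · exact hgen 1 hi h1
  ext m
  rw [coeff_C]
  by_cases hm : m = 0
  · rw [if_pos hm.symm, hm]
  · rw [if_neg (fun hh => hm hh.symm)]
    by_contra hc
    exact hm (hsupp m (mem_support_iff.mpr hc))

section Deg

variable {σ : Type*} {R : Type*}

lemma sum_eq_degree' (s : σ →₀ ℕ) : (s.sum fun _ e => e) = s.degree := by
  rw [Finsupp.sum, Finsupp.degree_apply]

lemma eq_C_of_totalDegree_eq_zero [CommSemiring R] {f : MvPolynomial σ R}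
    (h : f.totalDegree = 0) : f = C (coeff 0 f) := by
  have hsupp : ∀ s ∈ f.support, s = 0 := by
    intro s hs
    have := le_totalDegree (p := f) hs
    rw [h, Nat.le_zero, sum_eq_degree', Finsupp.degree_eq_zero_iff] at this
    exact this
  classical
  ext m
  rw [coeff_C]
  by_cases hm : m = 0
  · rw [if_pos hm.symm, hm]
  · rw [if_neg (fun hh => hm hh.symm)]
    by_contra hc
    exact hm (hsupp m (mem_support_iff.mpr hc))

lemma topComponent_ne_zero [CommSemiring R] {p : MvPolynomial σ R} (hp : p ≠ 0) :
    homogeneousComponent p.totalDegree p ≠ 0 := by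
  obtain ⟨s, hs, hsup⟩ := Finset.exists_mem_eq_sup p.support
    (MvPolynomial.support_nonempty.mpr hp) (fun s => s.sum fun _ e => e)
  have hdeg : s.degree = p.totalDegree := by
    rw [← sum_eq_degree', totalDegree, hsup]
  intro h
  have := coeff_homogeneousComponent (σ := σ) (R := R) p.totalDegree p s
  rw [h, coeff_zero, if_pos hdeg] at this
  exact (mem_support_iff.mp hs) this.symm

lemma sub_top_lt [CommRing R] (p : MvPolynomial σ R) :
    (p - homogeneousComponent p.totalDegree p).totalDegree < p.totalDegree ∨
      p - homogeneousComponent p.totalDegree p = 0 := by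
  by_cases h0 : p.totalDegree = 0
  · right
    rw [h0, homogeneousComponent_zero, ← eq_C_of_totalDegree_eq_zero h0, sub_self]
  · left
    rw [totalDegree]
    apply (Finset.sup_lt_iff (Nat.pos_of_ne_zero h0)).mpr
    intro s hs
    have hc : coeff s (p - homogeneousComponent p.totalDegree p) ≠ 0 := mem_support_iff.mp hs
    rw [coeff_sub, coeff_homogeneousComponent] at hc
    split_ifs at hc with hd
    · exact absurd (sub_self _) hc
    · rw [sub_zero] at hc
      have hlt := le_totalDegree (mem_support_iff.mpr hc)
      rw [sum_eq_degree'] at hlt ⊢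
      omega

lemma totalDegree_mul_eq [CommRing R] [IsDomain R] {p q : MvPolynomial σ R}
    (hp : p ≠ 0) (hq : q ≠ 0) :
    (p * q).totalDegree = p.totalDegree + q.totalDegree := by
  rcases Nat.eq_zero_or_pos (p.totalDegree + q.totalDegree) with hab | hab
  · have h := totalDegree_mul p q
    omega
  · set a := p.totalDegree with ha
    set b := q.totalDegree with hb
    set Pc := homogeneousComponent a p with hPc
    set Qc := homogeneousComponent b q with hQc
    have hP : Pc.IsHomogeneous a := homogeneousComponent_isHomogeneous a p
    have hQ : Qc.IsHomogeneous b := homogeneousComponent_isHomogeneous b q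
    have hP0 : Pc ≠ 0 := topComponent_ne_zero hp
    have hQ0 : Qc ≠ 0 := topComponent_ne_zero hq
    have hPQ : (Pc * Qc).totalDegree = a + b := (hP.mul hQ).totalDegree (mul_ne_zero hP0 hQ0)
    have key : p * q = Pc * Qc + (Pc * (q - Qc) + (p - Pc) * q) := by ring
    have h1 : (Pc * (q - Qc)).totalDegree < a + b := by
      rcases sub_top_lt q with h | h
      · rw [← hb, ← hQc] at h
        have hm := totalDegree_mul Pc (q - Qc)
        have := hP.totalDegree_le
        omega
      · rw [← hb, ← hQc] at h
        rw [h, mul_zero]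
        simpa using hab
    have h2 : ((p - Pc) * q).totalDegree < a + b := by
      rcases sub_top_lt p with h | h
      · rw [← ha, ← hPc] at h
        have hm := totalDegree_mul (p - Pc) q
        omega
      · rw [← ha, ← hPc] at h
        rw [h, zero_mul]
        simpa using hab
    have h3 : (Pc * (q - Qc) + (p - Pc) * q).totalDegree < a + b :=
      lt_of_le_of_lt (totalDegree_add _ _) (max_lt h1 h2)
    rw [key, totalDegree_add_eq_left_of_totalDegree_lt (by rw [hPQ]; exact h3), hPQ]

lemma totalDegree_le_of_dvd [CommRing R] [IsDomain R] {p q : MvPolynomial σ R}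
    (h : p ∣ q) (hq : q ≠ 0) : p.totalDegree ≤ q.totalDegree := by
  obtain ⟨c, rfl⟩ := h
  have hp : p ≠ 0 := left_ne_zero_of_mul hq
  have hc : c ≠ 0 := right_ne_zero_of_mul hq
  rw [totalDegree_mul_eq hp hc]
  exact Nat.le_add_right _ _

end Deg

noncomputable def Dop (p q : k) (f : P) : P := C q * pderiv 0 f - C p * pderiv 1 f

lemma Dop_mul (p q : k) (f g : P) :
    Dop p q (f * g) = f * Dop p q g + g * Dop p q f := by
  simp only [Dop, pderiv_mul]
  ring

lemma Dop_pow_mul (p q : k) (ℓ F : P) (n : ℕ) :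
    Dop p q (ℓ ^ n * F) = (n : P) * ℓ ^ (n - 1) * F * Dop p q ℓ + ℓ ^ n * Dop p q F := by
  simp only [Dop, pderiv_mul, pderiv_pow]
  ring

lemma dvd_Dop_pow_mul (p q : k) (ℓ F : P) (n : ℕ) :
    ℓ ^ (n - 1) ∣ Dop p q (ℓ ^ n * F) := by
  rw [Dop_pow_mul]
  exact dvd_add ⟨(n : P) * F * Dop p q ℓ, by ring⟩
    ((pow_dvd_pow ℓ (Nat.sub_le n 1)).mul_right _)

lemma dvd_Dop_pow_mul_of_kill (p q : k) (ℓ F : P) (n : ℕ) (hkill : Dop p q ℓ = 0) :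
    ℓ ^ n ∣ Dop p q (ℓ ^ n * F) := by
  rw [Dop_pow_mul, hkill]
  exact dvd_add ⟨0, by ring⟩ (dvd_mul_right _ _)

lemma W_cyclic (p q : k) (a b c : P) (h : a + b + c = 0) :
    c * Dop p q a - a * Dop p q c = a * Dop p q b - b * Dop p q a := by
  have hc : c = -a - b := by linear_combination h
  subst hc
  have hD : Dop p q (-a - b) = -(Dop p q a) - Dop p q b := by
    simp only [Dop, map_sub, map_neg]
    ring
  rw [hD]
  ring

lemma eq_single_of_degree_one (m : Fin 2 →₀ ℕ) (hm : m.degree = 1) :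
    m = Finsupp.single 0 1 ∨ m = Finsupp.single 1 1 := by
  rw [deg2] at hm
  by_cases h0 : m 0 = 1
  · left
    have h1 : m 1 = 0 := by omega
    ext j; fin_cases j <;> simp [Finsupp.single_apply] <;> omega
  · right
    have h1 : m 0 = 0 ∧ m 1 = 1 := by omega
    ext j; fin_cases j <;> simp [Finsupp.single_apply] <;> omega

lemma linear_eq_zero {ℓ : P} (hℓ : ℓ.IsHomogeneous 1)
    (h0 : coeff (Finsupp.single 0 1) ℓ = 0) (h1 : coeff (Finsupp.single 1 1) ℓ = 0) :
    ℓ = 0 := by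
  ext m
  rw [coeff_zero]
  by_cases hm : m.degree = 1
  · rcases eq_single_of_degree_one m hm with rfl | rfl
    · exact h0
    · exact h1
  · exact hℓ.coeff_eq_zero hm

lemma pderiv_linear {ℓ : P} (hℓ : ℓ.IsHomogeneous 1) (i : Fin 2) :
    pderiv i ℓ = C (coeff (Finsupp.single i 1) ℓ) := by
  ext m
  rw [coeff_pderiv, coeff_C]
  by_cases hm : m = 0
  · subst hm
    rw [if_pos rfl, zero_add]
    simp
  · rw [if_neg (fun hh => hm hh.symm)]
    have hd := degree_add_single m i
    have hmd : m.degree ≠ 0 := fun h => hm ((Finsupp.degree_eq_zero_iff m).mp h)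
    rw [hℓ.coeff_eq_zero (by omega), mul_zero]

lemma prime_linear {ℓ : P} (hℓ : ℓ.IsHomogeneous 1) (h0 : ℓ ≠ 0) : Prime ℓ := by
  apply UniqueFactorizationMonoid.irreducible_iff_prime.mp
  constructor
  · intro hu
    have hd := totalDegree_le_of_dvd hu.dvd one_ne_zero
    rw [hℓ.totalDegree h0, totalDegree_one] at hd
    omega
  · intro f g hfg
    have hf0 : f ≠ 0 := fun h => h0 (by rw [hfg, h, zero_mul])
    have hg0 : g ≠ 0 := fun h => h0 (by rw [hfg, h, mul_zero])
    have hsum : f.totalDegree + g.totalDegree = 1 := by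
      rw [← totalDegree_mul_eq hf0 hg0, ← hfg, hℓ.totalDegree h0]
    have hunit : ∀ h : P, h ≠ 0 → h.totalDegree = 0 → IsUnit h := by
      intro h hne hdeg
      have hC := eq_C_of_totalDegree_eq_zero hdeg
      have hc : coeff 0 h ≠ 0 := fun hcc => hne (by rw [hC, hcc, C_0])
      rw [hC]
      exact (isUnit_iff_ne_zero.mpr hc).map (C : k →+* P)
    rcases Nat.eq_zero_or_pos f.totalDegree with hf | hf
    · exact Or.inl (hunit f hf0 hf)
    · exact Or.inr (hunit g hg0 (by omega))

lemma not_dvd_of_indep {ℓa ℓb : P} (hℓa : ℓa.IsHomogeneous 1) (hℓb : ℓb.IsHomogeneous 1)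
    (hb0 : ℓb ≠ 0) (hne : ∀ c : k, ℓb ≠ C c * ℓa) : ¬ ℓa ∣ ℓb := by
  rintro ⟨g, hg⟩
  have ha0 : ℓa ≠ 0 := fun h => hb0 (by rw [hg, h, zero_mul])
  have hg0 : g ≠ 0 := fun h => hb0 (by rw [hg, h, mul_zero])
  have hsum : ℓa.totalDegree + g.totalDegree = 1 := by
    rw [← totalDegree_mul_eq ha0 hg0, ← hg, hℓb.totalDegree hb0]
  rw [hℓa.totalDegree ha0] at hsum
  obtain ⟨c, hc⟩ : ∃ c, g = C c := ⟨_, eq_C_of_totalDegree_eq_zero (f := g) (by omega)⟩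
  exact hne c (by rw [hg, hc]; ring)

lemma not_dvd_of_indep' {ℓa ℓb : P} (hℓa : ℓa.IsHomogeneous 1) (hℓb : ℓb.IsHomogeneous 1)
    (ha0 : ℓa ≠ 0) (hb0 : ℓb ≠ 0) (hne : ∀ c : k, ℓb ≠ C c * ℓa) : ¬ ℓb ∣ ℓa := by
  rintro ⟨g, hg⟩
  have hg0 : g ≠ 0 := fun h => ha0 (by rw [hg, h, mul_zero])
  have hsum : ℓb.totalDegree + g.totalDegree = 1 := by
    rw [← totalDegree_mul_eq hb0 hg0, ← hg, hℓa.totalDegree ha0]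
  rw [hℓb.totalDegree hb0] at hsum
  obtain ⟨c, hcg⟩ : ∃ c, g = C c := ⟨_, eq_C_of_totalDegree_eq_zero (f := g) (by omega)⟩
  have hc : c ≠ 0 := fun hcc => hg0 (by rw [hcg, hcc, C_0])
  apply hne c⁻¹
  rw [hg, hcg, mul_comm ℓb (C c), ← mul_assoc, ← C_mul,
    inv_mul_cancel₀ hc, C_1, one_mul]

lemma const_case [CharZero k] (a b : P) (ha : a ≠ 0) (hb : b ≠ 0)
    (hdeg : a.totalDegree = 0)
    (h0 : a * pderiv 0 b = b * pderiv 0 a) (h1 : a * pderiv 1 b = b * pderiv 1 a) :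
    ∃ c1 c2 : k, c1 ≠ 0 ∧ c2 ≠ 0 ∧ C c1 * a = C c2 * b := by
  obtain ⟨ca, rfl⟩ : ∃ c, a = C c := ⟨_, eq_C_of_totalDegree_eq_zero hdeg⟩
  have hca : ca ≠ 0 := fun h => ha (by rw [h, C_0])
  have h0' : pderiv 0 b = 0 := by
    rw [pderiv_C, mul_zero] at h0
    exact (mul_eq_zero.mp h0).resolve_left ha
  have h1' : pderiv 1 b = 0 := by
    rw [pderiv_C, mul_zero] at h1
    exact (mul_eq_zero.mp h1).resolve_left ha
  obtain ⟨cb, rfl⟩ : ∃ c, b = C c := ⟨_, eq_C_of_pderiv_eq_zero h0' h1'⟩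
  have hcb : cb ≠ 0 := fun h => hb (by rw [h, C_0])
  exact ⟨cb, ca, hcb, hca, by ring⟩

lemma propCase [CharZero k] : ∀ (n : ℕ) (a b : P), a ≠ 0 → b ≠ 0 → a.totalDegree ≤ n →
    a * pderiv 0 b = b * pderiv 0 a → a * pderiv 1 b = b * pderiv 1 a →
    ∃ c1 c2 : k, c1 ≠ 0 ∧ c2 ≠ 0 ∧ C c1 * a = C c2 * b := by
  intro n
  induction n with
  | zero =>
    intro a b ha hb hdeg h0 h1
    exact const_case a b ha hb (Nat.le_zero.mp hdeg) h0 h1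
  | succ n ih =>
    intro a b ha hb hdeg h0 h1
    by_cases hd0 : a.totalDegree = 0
    · exact const_case a b ha hb hd0 h0 h1
    · have hnu : ¬IsUnit a := by
        intro hu
        have := totalDegree_le_of_dvd hu.dvd (one_ne_zero : (1 : P) ≠ 0)
        rw [totalDegree_one] at this
        omega
      obtain ⟨pp, hirr, hdvd⟩ := WfDvdMonoid.exists_irreducible_factor hnu ha
      have hp : Prime pp := UniqueFactorizationMonoid.irreducible_iff_prime.mp hirr
      have hppdeg : 0 < pp.totalDegree := by
        rcases Nat.eq_zero_or_pos pp.totalDegree with h | h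
        · exfalso
          have hC := eq_C_of_totalDegree_eq_zero h
          have hc : coeff 0 pp ≠ 0 := fun hcc => hp.ne_zero (by rw [hC, hcc, C_0])
          exact hirr.not_isUnit (by
            rw [hC]
            exact (isUnit_iff_ne_zero.mpr hc).map (C : k →+* P))
        · exact h
      have hpb : pp ∣ b := by
        by_contra hpb
        obtain ⟨m, a₀, ha₀, haeq⟩ := WfDvdMonoid.max_power_factor ha hirr
        have hm1 : m ≠ 0 := by
          rintro rfl
          rw [pow_zero, one_mul] at haeq
          exact ha₀ (haeq ▸ hdvd)
        obtain ⟨m', rfl⟩ : ∃ m', m = m' + 1 := ⟨m - 1, by omega⟩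
        have hkey : ∀ i : Fin 2, a * pderiv i b = b * pderiv i a → pp ∣ pderiv i pp := by
          intro i hi
          rw [haeq, pderiv_mul, pderiv_pow, Nat.add_sub_cancel] at hi
          have hcan : pp * (a₀ * pderiv i b) - pp * (b * pderiv i a₀) =
              b * ((((m' + 1 : ℕ)) : P) * pderiv i pp * a₀) := by
            apply mul_left_cancel₀ (pow_ne_zero m' hp.ne_zero)
            ring_nf
            ring_nf at hi
            linear_combination hi
          have hdvd2 : pp ∣ b * ((((m' + 1 : ℕ)) : P) * pderiv i pp * a₀) :=
            ⟨a₀ * pderiv i b - b * pderiv i a₀, by linear_combination hcan.symm⟩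
          rcases hp.dvd_or_dvd hdvd2 with h | h
          · exact absurd h hpb
          rcases hp.dvd_or_dvd h with h2 | h2
          swap
          · exact absurd h2 ha₀
          rcases hp.dvd_or_dvd h2 with h3 | h3
          · exfalso
            have hcast : (((m' + 1 : ℕ)) : P) = C (((m' + 1 : ℕ)) : k) :=
              (map_natCast (C : k →+* P) (m' + 1)).symm
            have hu : IsUnit (((m' + 1 : ℕ)) : P) := by
              rw [hcast]
              exact (isUnit_iff_ne_zero.mpr
                (Nat.cast_ne_zero.mpr (Nat.succ_ne_zero m'))).map (C : k →+* P)
            exact hp.not_isUnit (isUnit_of_dvd_unit h3 hu)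
          · exact h3
        have hx0 : pderiv 0 pp = 0 := by
          by_contra hne
          exact absurd (totalDegree_le_of_dvd (hkey 0 h0) hne)
            (not_le.mpr (totalDegree_pderiv_lt hne))
        have hy0 : pderiv 1 pp = 0 := by
          by_contra hne
          exact absurd (totalDegree_le_of_dvd (hkey 1 h1) hne)
            (not_le.mpr (totalDegree_pderiv_lt hne))
        have hCpp := eq_C_of_pderiv_eq_zero hx0 hy0
        rw [hCpp, totalDegree_C] at hppdeg
        exact Nat.lt_irrefl 0 hppdeg
      obtain ⟨b', rfl⟩ := hpb
      obtain ⟨a', rfl⟩ := hdvd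
      have ha' : a' ≠ 0 := right_ne_zero_of_mul ha
      have hb' : b' ≠ 0 := right_ne_zero_of_mul hb
      have hstep : ∀ i : Fin 2,
          (pp * a') * pderiv i (pp * b') = (pp * b') * pderiv i (pp * a') →
          a' * pderiv i b' = b' * pderiv i a' := by
        intro i hi
        rw [pderiv_mul, pderiv_mul] at hi
        apply mul_left_cancel₀ hp.ne_zero
        apply mul_left_cancel₀ hp.ne_zero
        linear_combination hi
      have hdeg' : a'.totalDegree ≤ n := by
        have := totalDegree_mul_eq hp.ne_zero ha'
        omega
      obtain ⟨c1, c2, hc1, hc2, hcc⟩ := ih a' b' ha' hb' hdeg' (hstep 0 h0) (hstep 1 h1)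
      exact ⟨c1, c2, hc1, hc2, by linear_combination pp * hcc⟩

lemma pderiv_totalDegree_le (i : Fin 2) (f : P) :
    (pderiv i f).totalDegree ≤ f.totalDegree - 1 ∨ pderiv i f = 0 := by
  by_cases h : pderiv i f = 0
  · exact Or.inr h
  · left
    have := totalDegree_pderiv_lt h
    omega

lemma Dop_totalDegree_le (p q : k) (f : P) :
    (Dop p q f).totalDegree ≤ f.totalDegree - 1 := by
  have b0 : (C q * pderiv 0 f).totalDegree ≤ f.totalDegree - 1 := by
    rcases pderiv_totalDegree_le 0 f with h | h
    · have h2 := totalDegree_mul (C q) (pderiv 0 f)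
      have h3 : (C q : P).totalDegree = 0 := totalDegree_C q
      omega
    · rw [h, mul_zero, totalDegree_zero]
      exact Nat.zero_le _
  have b1 : (C p * pderiv 1 f).totalDegree ≤ f.totalDegree - 1 := by
    rcases pderiv_totalDegree_le 1 f with h | h
    · have h2 := totalDegree_mul (C p) (pderiv 1 f)
      have h3 : (C p : P).totalDegree = 0 := totalDegree_C p
      omega
    · rw [h, mul_zero, totalDegree_zero]
      exact Nat.zero_le _
  exact (totalDegree_sub _ _).trans (max_le b0 b1)

lemma core {ℓa ℓb ℓc A B Cc : P} {da db dc ra rb rc d : ℕ}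
    (hℓa : ℓa.IsHomogeneous 1) (hℓb : ℓb.IsHomogeneous 1) (hℓc : ℓc.IsHomogeneous 1)
    (ha0 : ℓa ≠ 0) (hb0 : ℓb ≠ 0) (hc0 : ℓc ≠ 0)
    (hA : A.IsHomogeneous da) (hB : B.IsHomogeneous db) (hCc : Cc.IsHomogeneous dc)
    (hA0 : A ≠ 0) (hB0 : B ≠ 0) (hC0 : Cc ≠ 0)
    (hda : ra + da = d) (hdb : rb + db = d) (hdc : rc + dc = d)
    (hra : 1 ≤ ra) (hrb : 1 ≤ rb) (hrc : 1 ≤ rc)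
    (hab : ¬ ℓa ∣ ℓb) (hcb : ¬ ℓc ∣ ℓb) (hca : ¬ ℓc ∣ ℓa)
    (heq : ℓa ^ ra * A + ℓb ^ rb * B + ℓc ^ rc * Cc = 0)
    (p q : k) (hkill : Dop p q ℓb = 0)
    (hW : (ℓa ^ ra * A) * Dop p q (ℓb ^ rb * B) -
      (ℓb ^ rb * B) * Dop p q (ℓa ^ ra * A) ≠ 0) :
    ra + rb + rc ≤ 2 * d + 1 := by
  set a := ℓa ^ ra * A with ha_def
  set b := ℓb ^ rb * B with hb_def
  set c := ℓc ^ rc * Cc with hc_def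
  set W := a * Dop p q b - b * Dop p q a with hW_def
  have pa : Prime ℓa := prime_linear hℓa ha0
  have pb : Prime ℓb := prime_linear hℓb hb0
  have pc : Prime ℓc := prime_linear hℓc hc0
  have div_a : ℓa ^ (ra - 1) ∣ W :=
    dvd_sub (((pow_dvd_pow ℓa (Nat.sub_le ra 1)).mul_right A).mul_right _)
      ((dvd_Dop_pow_mul p q ℓa A ra).mul_left _)
  have div_b : ℓb ^ rb ∣ W :=
    dvd_sub ((dvd_Dop_pow_mul_of_kill p q ℓb B rb hkill).mul_left _)
      ((dvd_mul_right (ℓb ^ rb) B).mul_right _)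
  have hWc : W = b * Dop p q c - c * Dop p q b :=
    hW_def.trans (W_cyclic p q b c a (by linear_combination heq))
  have div_c : ℓc ^ (rc - 1) ∣ W := by
    rw [hWc]
    exact dvd_sub ((dvd_Dop_pow_mul p q ℓc Cc rc).mul_left _)
      (((pow_dvd_pow ℓc (Nat.sub_le rc 1)).mul_right Cc).mul_right _)
  obtain ⟨W1, hW1⟩ := div_b
  have hnab : ¬ ℓa ∣ ℓb ^ rb := fun h => hab (pa.dvd_of_dvd_pow h)
  have div_a' : ℓa ^ (ra - 1) ∣ W1 :=
    pa.pow_dvd_of_dvd_mul_left _ hnab (hW1 ▸ div_a)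
  obtain ⟨W2, hW2⟩ := div_a'
  have hncb : ¬ ℓc ∣ ℓb ^ rb := fun h => hcb (pc.dvd_of_dvd_pow h)
  have hnca : ¬ ℓc ∣ ℓa ^ (ra - 1) := fun h => hca (pc.dvd_of_dvd_pow h)
  have div_c' : ℓc ^ (rc - 1) ∣ W2 := by
    have s1 : ℓc ^ (rc - 1) ∣ ℓb ^ rb * (ℓa ^ (ra - 1) * W2) := by
      rw [← hW2, ← hW1]
      exact div_c
    exact pc.pow_dvd_of_dvd_mul_left _ hnca
      (pc.pow_dvd_of_dvd_mul_left _ hncb s1)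
  obtain ⟨W3, hW3⟩ := div_c'
  have Xdvd : ℓa ^ (ra - 1) * (ℓb ^ rb * ℓc ^ (rc - 1)) ∣ W :=
    ⟨W3, by rw [hW1, hW2, hW3]; ring⟩
  have hX : (ℓa ^ (ra - 1) * (ℓb ^ rb * ℓc ^ (rc - 1))).IsHomogeneous
      ((ra - 1) + (rb + (rc - 1))) := by
    have := (hℓa.pow (ra - 1)).mul ((hℓb.pow rb).mul (hℓc.pow (rc - 1)))
    rwa [one_mul, one_mul, one_mul] at this
  have hX0 : ℓa ^ (ra - 1) * (ℓb ^ rb * ℓc ^ (rc - 1)) ≠ 0 :=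
    mul_ne_zero (pow_ne_zero _ ha0) (mul_ne_zero (pow_ne_zero _ hb0) (pow_ne_zero _ hc0))
  have hXdeg := hX.totalDegree hX0
  have hlow : (ra - 1) + (rb + (rc - 1)) ≤ W.totalDegree := by
    rw [← hXdeg]
    exact totalDegree_le_of_dvd Xdvd hW
  have hahom : a.IsHomogeneous d := by
    have := (hℓa.pow ra).mul hA
    rw [one_mul, hda] at this
    exact this
  have hbhom : b.IsHomogeneous d := by
    have := (hℓb.pow rb).mul hB
    rw [one_mul, hdb] at this
    exact this
  have hWhigh : W.totalDegree ≤ 2 * d - 1 := by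
    have t1 : (a * Dop p q b).totalDegree ≤ 2 * d - 1 := by
      have h1 := totalDegree_mul a (Dop p q b)
      have h2 := Dop_totalDegree_le p q b
      have h3 := hahom.totalDegree_le
      have h4 := hbhom.totalDegree_le
      omega
    have t2 : (b * Dop p q a).totalDegree ≤ 2 * d - 1 := by
      have h1 := totalDegree_mul b (Dop p q a)
      have h2 := Dop_totalDegree_le p q a
      have h3 := hahom.totalDegree_le
      have h4 := hbhom.totalDegree_le
      omega
    exact (totalDegree_sub _ _).trans (max_le t1 t2)
  omega

end MinExpAux

open MinExpAux in
/-- If `R, T, U ∈ k[x₂,x₃]` are nonzero homogeneous polynomials, `ℓ₁, ℓ₂, ℓ₃` are pairwise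
independent linear forms, and `ℓ₁^r R + ℓ₂^t T + ℓ₃^u U = 0`, where each summand has total
degree `d`, then `min {r, t, u} ≤ ⌊(2d+1)/3⌋`. -/
theorem min_exponent_le (k : Type*) [Field k] [CharZero k]
    (R T U ℓ₁ ℓ₂ ℓ₃ : MvPolynomial (Fin 2) k)
    (hR0 : R ≠ 0) (hT0 : T ≠ 0) (hU0 : U ≠ 0)
    (dR dT dU : ℕ) (hR : R.IsHomogeneous dR) (hT : T.IsHomogeneous dT)
    (hU : U.IsHomogeneous dU)
    (hℓ₁0 : ℓ₁ ≠ 0) (hℓ₂0 : ℓ₂ ≠ 0) (hℓ₃0 : ℓ₃ ≠ 0)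
    (hℓ₁ : ℓ₁.IsHomogeneous 1) (hℓ₂ : ℓ₂.IsHomogeneous 1) (hℓ₃ : ℓ₃.IsHomogeneous 1)
    (h12 : ∀ a : k, ℓ₂ ≠ C a * ℓ₁) (h13 : ∀ a : k, ℓ₃ ≠ C a * ℓ₁)
    (h23 : ∀ a : k, ℓ₃ ≠ C a * ℓ₂)
    (r t u d : ℕ) (hdR : r + dR = d) (hdT : t + dT = d) (hdU : u + dU = d)
    (heq : ℓ₁ ^ r * R + ℓ₂ ^ t * T + ℓ₃ ^ u * U = 0) :
    min (min r t) u ≤ (2 * d + 1) / 3 := by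
  suffices hsuf : min (min r t) u * 3 ≤ 2 * d + 1 by
    exact (Nat.le_div_iff_mul_le (by norm_num)).mpr hsuf
  rcases Nat.eq_zero_or_pos r with hr | hr
  · omega
  rcases Nat.eq_zero_or_pos t with ht | ht
  · omega
  rcases Nat.eq_zero_or_pos u with hu | hu
  · omega
  -- basic non-divisibilities
  have nd12 : ¬ ℓ₁ ∣ ℓ₂ := not_dvd_of_indep hℓ₁ hℓ₂ hℓ₂0 h12
  have nd21 : ¬ ℓ₂ ∣ ℓ₁ := not_dvd_of_indep' hℓ₁ hℓ₂ hℓ₁0 hℓ₂0 h12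
  have nd13 : ¬ ℓ₁ ∣ ℓ₃ := not_dvd_of_indep hℓ₁ hℓ₃ hℓ₃0 h13
  have nd31 : ¬ ℓ₃ ∣ ℓ₁ := not_dvd_of_indep' hℓ₁ hℓ₃ hℓ₁0 hℓ₃0 h13
  have nd23 : ¬ ℓ₂ ∣ ℓ₃ := not_dvd_of_indep hℓ₂ hℓ₃ hℓ₃0 h23
  have nd32 : ¬ ℓ₃ ∣ ℓ₂ := not_dvd_of_indep' hℓ₂ hℓ₃ hℓ₂0 hℓ₃0 h23
  -- coefficients of the linear forms
  set α₁ := coeff (Finsupp.single 0 1) ℓ₁ with hα₁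
  set β₁ := coeff (Finsupp.single 1 1) ℓ₁ with hβ₁
  set α₂ := coeff (Finsupp.single 0 1) ℓ₂ with hα₂
  set β₂ := coeff (Finsupp.single 1 1) ℓ₂ with hβ₂
  have hkill1 : Dop α₁ β₁ ℓ₁ = 0 := by
    rw [Dop, pderiv_linear hℓ₁ 0, pderiv_linear hℓ₁ 1, ← hα₁, ← hβ₁]
    ring
  have hkill2 : Dop α₂ β₂ ℓ₂ = 0 := by
    rw [Dop, pderiv_linear hℓ₂ 0, pderiv_linear hℓ₂ 1, ← hα₂, ← hβ₂]
    ring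
  by_cases hW2 : (ℓ₁ ^ r * R) * Dop α₂ β₂ (ℓ₂ ^ t * T) -
      (ℓ₂ ^ t * T) * Dop α₂ β₂ (ℓ₁ ^ r * R) = 0
  · by_cases hW1 : (ℓ₁ ^ r * R) * Dop α₁ β₁ (ℓ₂ ^ t * T) -
        (ℓ₂ ^ t * T) * Dop α₁ β₁ (ℓ₁ ^ r * R) = 0
    · -- degenerate case: both Wronskians vanish
      have ha0 : ℓ₁ ^ r * R ≠ 0 := mul_ne_zero (pow_ne_zero _ hℓ₁0) hR0
      have hb0 : ℓ₂ ^ t * T ≠ 0 := mul_ne_zero (pow_ne_zero _ hℓ₂0) hT0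
      have hdet : α₁ * β₂ - α₂ * β₁ ≠ 0 := by
        intro hd0
        by_cases hα : α₁ = 0
        · have hβ : β₁ ≠ 0 := by
            intro hβ
            exact hℓ₁0 (linear_eq_zero hℓ₁ (hα₁ ▸ hα) (hβ₁ ▸ hβ))
          apply h12 (β₂ * β₁⁻¹)
          have hz : ℓ₂ - C (β₂ * β₁⁻¹) * ℓ₁ = 0 := by
            apply linear_eq_zero (hℓ₂.sub (hℓ₁.C_mul _))
            · rw [coeff_sub, coeff_C_mul, ← hα₂, ← hα₁, hα, mul_zero, sub_zero]
              have hz2 : α₂ * β₁ = 0 := by rw [hα] at hd0; linear_combination -hd0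
              rcases mul_eq_zero.mp hz2 with h | h
              · exact h
              · exact absurd h hβ
            · rw [coeff_sub, coeff_C_mul, ← hβ₂, ← hβ₁]
              field_simp
              ring
          linear_combination hz
        · apply h12 (α₂ * α₁⁻¹)
          have hz : ℓ₂ - C (α₂ * α₁⁻¹) * ℓ₁ = 0 := by
            apply linear_eq_zero (hℓ₂.sub (hℓ₁.C_mul _))
            · rw [coeff_sub, coeff_C_mul, ← hα₂, ← hα₁]
              field_simp
              ring
            · rw [coeff_sub, coeff_C_mul, ← hβ₂, ← hβ₁]
              field_simp
              linear_combination hd0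
          linear_combination hz
      -- from the two vanishing Wronskians, both partial Wronskians vanish
      simp only [Dop] at hW1 hW2
      have hCx : C (α₁ * β₂ - α₂ * β₁) *
          ((ℓ₁ ^ r * R) * pderiv 0 (ℓ₂ ^ t * T) - (ℓ₂ ^ t * T) * pderiv 0 (ℓ₁ ^ r * R)) = 0 := by
        simp only [map_sub, map_mul]
        linear_combination C α₁ * hW2 - C α₂ * hW1
      have hCy : C (α₁ * β₂ - α₂ * β₁) *
          ((ℓ₁ ^ r * R) * pderiv 1 (ℓ₂ ^ t * T) - (ℓ₂ ^ t * T) * pderiv 1 (ℓ₁ ^ r * R)) = 0 := by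
        simp only [map_sub, map_mul]
        linear_combination C β₁ * hW2 - C β₂ * hW1
      have hCne : (C (α₁ * β₂ - α₂ * β₁) : MvPolynomial (Fin 2) k) ≠ 0 := by
        intro hq
        apply hdet
        have := congrArg (coeff 0) hq
        simpa using this
      have hx := sub_eq_zero.mp ((mul_eq_zero.mp hCx).resolve_left hCne)
      have hy := sub_eq_zero.mp ((mul_eq_zero.mp hCy).resolve_left hCne)
      obtain ⟨c1, c2, hc1, hc2, hcc⟩ :=
        propCase (ℓ₁ ^ r * R).totalDegree (ℓ₁ ^ r * R) (ℓ₂ ^ t * T) ha0 hb0 le_rfl hx hy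
      have pb : Prime ℓ₂ := prime_linear hℓ₂ hℓ₂0
      have h1 : ℓ₂ ^ t ∣ C c1 * (ℓ₁ ^ r * R) := by
        rw [hcc]
        exact (dvd_mul_right (ℓ₂ ^ t) T).mul_left (C c2)
      have hnc : ¬ ℓ₂ ∣ C c1 := by
        intro h
        exact pb.not_isUnit (isUnit_of_dvd_unit h ((isUnit_iff_ne_zero.mpr hc1).map
          (C : k →+* MvPolynomial (Fin 2) k)))
      have h2 : ℓ₂ ^ t ∣ ℓ₁ ^ r * R := pb.pow_dvd_of_dvd_mul_left _ hnc h1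
      have h3 : ℓ₂ ^ t ∣ R := pb.pow_dvd_of_dvd_mul_left _
        (fun h => nd21 (pb.dvd_of_dvd_pow h)) h2
      have h4 := totalDegree_le_of_dvd h3 hR0
      have h5 : (ℓ₂ ^ t).totalDegree = t := by
        have := (hℓ₂.pow t).totalDegree (pow_ne_zero t hℓ₂0)
        rwa [one_mul] at this
      rw [h5, hR.totalDegree hR0] at h4
      omega
    · -- second Wronskian nonzero : apply core with (ℓ₃,U),(ℓ₁,R),(ℓ₂,T)
      have hWne : (ℓ₃ ^ u * U) * Dop α₁ β₁ (ℓ₁ ^ r * R) -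
          (ℓ₁ ^ r * R) * Dop α₁ β₁ (ℓ₃ ^ u * U) ≠ 0 := by
        rw [W_cyclic α₁ β₁ (ℓ₁ ^ r * R) (ℓ₂ ^ t * T) (ℓ₃ ^ u * U) heq]
        exact hW1
      have hcore := core hℓ₃ hℓ₁ hℓ₂ hℓ₃0 hℓ₁0 hℓ₂0 hU hR hT hU0 hR0 hT0
        hdU hdR hdT hu hr ht nd31 nd21 nd23
        (by linear_combination heq) α₁ β₁ hkill1 hWne
      omega
  · -- first Wronskian nonzero : apply core with (ℓ₁,R),(ℓ₂,T),(ℓ₃,U)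
    have hcore := core hℓ₁ hℓ₂ hℓ₃ hℓ₁0 hℓ₂0 hℓ₃0 hR hT hU hR0 hT0 hU0
      hdR hdT hdU hr ht hu nd12 nd32 nd31 heq α₂ β₂ hkill2 hW2
    omega
end

section
/- Let k be a field of characteristic zero, let p ≥ 1 be an integer, and let R, T, U ∈ k[x2,x3] be nonzero weighted homogeneous polynomials for the weights w(x2) = p, w(x3) = 1. Assume there exist natural numbers r, t, u, m such that the weighted degrees satisfy deg R + rp = deg T + tp = deg U + up = m. Suppose that for some distinct nonzero c, c' ∈ k we have x2^r R + (x2 + c x3^p)^t T + (x2 + c' x3^p)^u U = 0. Write m = αp + β with 0 ≤ β < p (the Euclidean division of m by p) and assume α ≥ 2. Then min{rp, tp, up} ≤ (3/4)·m. -/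
section ThreeTermHelpers

open Polynomial UniqueFactorizationMonoid UniqueFactorizationDomain

lemma rad_bound {k : Type*} [Field k] [DecidableEq k] (q : Polynomial k) (hq : q ≠ 0) (x : k) :
    (radical q).natDegree + rootMultiplicity x q ≤ q.natDegree + 1 := by
  rcases Nat.eq_zero_or_pos (rootMultiplicity x q) with h0 | hpos
  · rw [h0, add_zero]
    have := Polynomial.natDegree_le_of_dvd (radical_dvd_self (a := q)) hq
    omega
  · set v := rootMultiplicity x q with hv
    set s := q /ₘ (X - C x) ^ v with hs
    have hqs : (X - C x) ^ v * s = q := Polynomial.pow_mul_divByMonic_rootMultiplicity_eq q x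
    have hs0 : s ≠ 0 := by
      intro h; rw [h, mul_zero] at hqs; exact hq hqs.symm
    have hnd : ¬ (X - C x) ∣ s := by
      intro hdvd
      have h2 := Polynomial.eval_divByMonic_pow_rootMultiplicity_ne_zero x hq
      exact h2 ((Polynomial.dvd_iff_isRoot).1 hdvd)
    have hcop : IsCoprime ((X - C x) ^ v) s :=
      (((Polynomial.irreducible_X_sub_C x).coprime_iff_not_dvd).2 hnd).pow_left
    have hrad : radical q = (X - C x) * radical s := by
      rw [← hqs, radical_mul hcop.isRelPrime, radical_pow _ hpos.ne',
        radical_of_prime (Polynomial.prime_X_sub_C x),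
        Polynomial.Monic.normalize_eq_self (Polynomial.monic_X_sub_C x)]
    have h3 : (radical s).natDegree ≤ s.natDegree :=
      Polynomial.natDegree_le_of_dvd (radical_dvd_self (a := s)) hs0
    have h4 : q.natDegree = v + s.natDegree := by
      rw [← hqs, Polynomial.natDegree_mul (pow_ne_zero _ (Polynomial.X_sub_C_ne_zero x)) hs0]
      · simp [Polynomial.natDegree_pow]
    have h5 : (radical q).natDegree = 1 + (radical s).natDegree := by
      rw [hrad, Polynomial.natDegree_mul (Polynomial.X_sub_C_ne_zero x) (radical_ne_zero (a := s))]
      simp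
    omega

lemma three_roots {k : Type*} [Field k] (q : Polynomial k) (hq : q ≠ 0) {x y z : k}
    (hxy : x ≠ y) (hyz : y ≠ z) (hxz : x ≠ z) :
    rootMultiplicity x q + rootMultiplicity y q + rootMultiplicity z q ≤ q.natDegree := by
  have cxy : IsCoprime ((X - C x) ^ rootMultiplicity x q) ((X - C y) ^ rootMultiplicity y q) :=
    ((Polynomial.isCoprime_X_sub_C_of_isUnit_sub (by simpa using sub_ne_zero.2 hxy)).pow)
  have cxz : IsCoprime ((X - C x) ^ rootMultiplicity x q) ((X - C z) ^ rootMultiplicity z q) :=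
    ((Polynomial.isCoprime_X_sub_C_of_isUnit_sub (by simpa using sub_ne_zero.2 hxz)).pow)
  have cyz : IsCoprime ((X - C y) ^ rootMultiplicity y q) ((X - C z) ^ rootMultiplicity z q) :=
    ((Polynomial.isCoprime_X_sub_C_of_isUnit_sub (by simpa using sub_ne_zero.2 hyz)).pow)
  have d1 : (X - C x) ^ rootMultiplicity x q * (X - C y) ^ rootMultiplicity y q ∣ q :=
    cxy.mul_dvd (Polynomial.pow_rootMultiplicity_dvd q x) (Polynomial.pow_rootMultiplicity_dvd q y)
  have d2 : (X - C x) ^ rootMultiplicity x q * (X - C y) ^ rootMultiplicity y q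
      * (X - C z) ^ rootMultiplicity z q ∣ q :=
    (cxz.mul_left cyz).mul_dvd d1 (Polynomial.pow_rootMultiplicity_dvd q z)
  have := Polynomial.natDegree_le_of_dvd d2 hq
  rw [Polynomial.natDegree_mul (mul_ne_zero (pow_ne_zero _ (Polynomial.X_sub_C_ne_zero x))
      (pow_ne_zero _ (Polynomial.X_sub_C_ne_zero y))) (pow_ne_zero _ (Polynomial.X_sub_C_ne_zero z)),
    Polynomial.natDegree_mul (pow_ne_zero _ (Polynomial.X_sub_C_ne_zero x))
      (pow_ne_zero _ (Polynomial.X_sub_C_ne_zero y))] at this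
  simp only [Polynomial.natDegree_pow, Polynomial.natDegree_X_sub_C, mul_one] at this
  omega

lemma sum_bound {k : Type*} [Field k] [CharZero k] {c d : k} (hc : c ≠ 0) (hd : d ≠ 0)
    (hcd : c ≠ d) {F G H : Polynomial k} (hF : F ≠ 0) (hG : G ≠ 0) (hH : H ≠ 0)
    {r t u α : ℕ}
    (hdF : r + F.natDegree ≤ α) (hdG : t + G.natDegree ≤ α) (hdH : u + H.natDegree ≤ α)
    (E : X ^ r * F + (X + C c) ^ t * G + (X + C d) ^ u * H = 0) :
    r + t + u ≤ 2 * α + 2 ∨ r + t ≤ α := by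
  classical
  set a := X ^ r * F with ha_def
  set b := (X + C c) ^ t * G with hb_def
  set e := (X + C d) ^ u * H with he_def
  have ha : a ≠ 0 := mul_ne_zero (pow_ne_zero _ X_ne_zero) hF
  have hb : b ≠ 0 := mul_ne_zero (pow_ne_zero _ (Polynomial.monic_X_add_C c).ne_zero) hG
  have he : e ≠ 0 := mul_ne_zero (pow_ne_zero _ (Polynomial.monic_X_add_C d).ne_zero) hH
  -- rewrite X, X + C c, X + C d as X - C _
  have hX0 : (X : Polynomial k) = X - C 0 := by simp
  have hXc : (X + C c : Polynomial k) = X - C (-c) := by simp [sub_neg_eq_add]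
  have hXd : (X + C d : Polynomial k) = X - C (-d) := by simp [sub_neg_eq_add]
  have nda : a.natDegree = r + F.natDegree := by
    rw [ha_def, Polynomial.natDegree_mul (pow_ne_zero _ X_ne_zero) hF]
    simp [Polynomial.natDegree_pow]
  have ndb : b.natDegree = t + G.natDegree := by
    rw [hb_def, Polynomial.natDegree_mul (pow_ne_zero _ (Polynomial.monic_X_add_C c).ne_zero) hG]
    simp [Polynomial.natDegree_pow]
  have nde : e.natDegree = u + H.natDegree := by
    rw [he_def, Polynomial.natDegree_mul (pow_ne_zero _ (Polynomial.monic_X_add_C d).ne_zero) hH]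
    simp [Polynomial.natDegree_pow]
  have rma : r ≤ rootMultiplicity 0 a := by
    rw [ha_def, Polynomial.rootMultiplicity_mul (ha_def ▸ ha), hX0,
      Polynomial.rootMultiplicity_X_sub_C_pow]
    omega
  have rmb : t ≤ rootMultiplicity (-c) b := by
    rw [hb_def, Polynomial.rootMultiplicity_mul (hb_def ▸ hb), hXc,
      Polynomial.rootMultiplicity_X_sub_C_pow]
    omega
  have rme : u ≤ rootMultiplicity (-d) e := by
    rw [he_def, Polynomial.rootMultiplicity_mul (he_def ▸ he), hXd,
      Polynomial.rootMultiplicity_X_sub_C_pow]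
    omega
  set g := GCDMonoid.gcd a b with hg_def
  have hg : g ≠ 0 := gcd_ne_zero_of_left ha
  set a' := a / g with ha'_def
  set b' := b / g with hb'_def
  set e' := e / g with he'_def
  have haeq : g * a' = a := EuclideanDomain.mul_div_cancel' hg (gcd_dvd_left a b)
  have hbeq : g * b' = b := EuclideanDomain.mul_div_cancel' hg (gcd_dvd_right a b)
  have hge : g ∣ e := by
    have : e = -a - b := by linear_combination E
    rw [this]
    exact dvd_sub (dvd_neg.2 (gcd_dvd_left a b)) (gcd_dvd_right a b)
  have heeq : g * e' = e := EuclideanDomain.mul_div_cancel' hg hge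
  have ha' : a' ≠ 0 := by intro h; rw [h, mul_zero] at haeq; exact ha haeq.symm
  have hb' : b' ≠ 0 := by intro h; rw [h, mul_zero] at hbeq; exact hb hbeq.symm
  have he' : e' ≠ 0 := by intro h; rw [h, mul_zero] at heeq; exact he heeq.symm
  have hsum' : a' + b' + e' = 0 := by
    have h1 : g * (a' + b' + e') = 0 := by
      rw [mul_add, mul_add, haeq, hbeq, heeq]; exact E
    rcases mul_eq_zero.1 h1 with h | h
    · exact absurd h hg
    · exact h
  have hab' : IsCoprime a' b' := isCoprime_div_gcd_div_gcd hb
  have hbe' : IsCoprime b' e' := by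
    have : e' = -(a' + b' * 1) := by linear_combination hsum'
    rw [this]
    exact (hab'.symm.add_mul_left_right 1).neg_right
  have hea' : IsCoprime e' a' := by
    have : e' = -(b' + a' * 1) := by linear_combination hsum'
    rw [this]
    exact ((hab'.add_mul_left_right 1).neg_right).symm
  rcases Polynomial.abc ha' hb' he' hab' hsum' with ⟨ineqa, _, _⟩ | ⟨da', db', de'⟩
  · -- Mason case
    left
    have radmul : radical (a' * b' * e') = radical a' * radical b' * radical e' := by
      rw [radical_mul (hea'.symm.mul_left hbe').isRelPrime, radical_mul hab'.isRelPrime]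
    have ndrad : (radical (a' * b' * e')).natDegree
        = (radical a').natDegree + (radical b').natDegree + (radical e').natDegree := by
      rw [radmul, Polynomial.natDegree_mul (mul_ne_zero (radical_ne_zero (a := a')) (radical_ne_zero (a := b')))
        (radical_ne_zero (a := e')), Polynomial.natDegree_mul (radical_ne_zero (a := a')) (radical_ne_zero (a := b'))]
    have B1 := rad_bound a' ha' 0
    have B2 := rad_bound b' hb' (-c)
    have B3 := rad_bound e' he' (-d)
    have M1 : rootMultiplicity 0 a = rootMultiplicity 0 g + rootMultiplicity 0 a' := by
      rw [← haeq, Polynomial.rootMultiplicity_mul (haeq ▸ ha)]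
    have M2 : rootMultiplicity (-c) b = rootMultiplicity (-c) g + rootMultiplicity (-c) b' := by
      rw [← hbeq, Polynomial.rootMultiplicity_mul (hbeq ▸ hb)]
    have M3 : rootMultiplicity (-d) e = rootMultiplicity (-d) g + rootMultiplicity (-d) e' := by
      rw [← heeq, Polynomial.rootMultiplicity_mul (heeq ▸ he)]
    have TR := three_roots g hg (x := 0) (y := -c) (z := -d)
      (by simpa [eq_comm] using hc) (by simpa using hcd) (by simpa [eq_comm] using hd)
    have D1 : a.natDegree = g.natDegree + a'.natDegree := by
      rw [← haeq, Polynomial.natDegree_mul hg ha']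
    have D2 : b.natDegree = g.natDegree + b'.natDegree := by
      rw [← hbeq, Polynomial.natDegree_mul hg hb']
    have D3 : e.natDegree = g.natDegree + e'.natDegree := by
      rw [← heeq, Polynomial.natDegree_mul hg he']
    rw [ndrad] at ineqa
    omega
  · -- degenerate case: all constants
    right
    have na' : a'.natDegree = 0 := Polynomial.natDegree_eq_zero_of_derivative_eq_zero da'
    have nb' : b'.natDegree = 0 := Polynomial.natDegree_eq_zero_of_derivative_eq_zero db'
    obtain ⟨ca, hca⟩ := Polynomial.natDegree_eq_zero.1 na'
    obtain ⟨cb, hcb⟩ := Polynomial.natDegree_eq_zero.1 nb'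
    have hca0 : ca ≠ 0 := by rintro rfl; simp at hca; exact ha' hca.symm
    have hXrb : (X : Polynomial k) ^ r ∣ b := by
      have h1 : (X : Polynomial k) ^ r ∣ a := Dvd.intro _ rfl
      have h2 : b = a * C (ca⁻¹ * cb) := by
        rw [← haeq, ← hbeq, ← hca, ← hcb]
        rw [mul_assoc, ← map_mul]
        rw [mul_inv_cancel_left₀ hca0]
      rw [h2]
      exact Dvd.dvd.mul_right h1 _
    have hcop : IsCoprime ((X : Polynomial k) ^ r) ((X + C c) ^ t) := by
      have h3 := (Polynomial.isCoprime_X_sub_C_of_isUnit_sub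
        (by simpa using hc.isUnit : IsUnit ((0:k) - -c))).pow (m := r) (n := t)
      simpa [sub_neg_eq_add] using h3
    have hXG : (X : Polynomial k) ^ r ∣ G := hcop.dvd_of_dvd_mul_left (hb_def ▸ hXrb)
    have : r ≤ G.natDegree := by
      have := Polynomial.natDegree_le_of_dvd hXG hG
      simpa [Polynomial.natDegree_pow] using this
    omega

lemma lin2 {k : Type*} [Field k] [CharZero k] {c d : k} (hc : c ≠ 0) (hd : d ≠ 0)
    (hcd : c ≠ d) {f0 g0 h0 : k} (hf : f0 ≠ 0)
    (E : X ^ 2 * C f0 + (X + C c) ^ 2 * C g0 + (X + C d) ^ 2 * C h0 = (0 : Polynomial k)) :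
    False := by
  have e0 := congrArg (Polynomial.eval (0:k)) E
  have e1 := congrArg (Polynomial.eval (-c)) E
  have e2 := congrArg (Polynomial.eval (-d)) E
  simp only [eval_add, eval_mul, eval_pow, eval_X, eval_C, eval_zero] at e0 e1 e2
  have key : (2:k) * c^2 * d^2 * f0 = 0 := by
    linear_combination d^2 * e1 + c^2 * e2 - (c-d)^2 * e0
  have h2 : (2:k) * c^2 * d^2 ≠ 0 :=
    mul_ne_zero (mul_ne_zero two_ne_zero (pow_ne_zero _ hc)) (pow_ne_zero _ hd)
  exact hf ((mul_eq_zero.1 key).resolve_left h2)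

lemma lin5 {k : Type*} [Field k] [CharZero k] {c d : k} (hc : c ≠ 0) (hd : d ≠ 0)
    (hcd : c ≠ d) {a1 a0 b1 b0 e1' e0' : k} (hf : ¬(a1 = 0 ∧ a0 = 0))
    (E : X ^ 4 * (C a1 * X + C a0) + (X + C c) ^ 4 * (C b1 * X + C b0)
        + (X + C d) ^ 4 * (C e1' * X + C e0') = (0 : Polynomial k)) :
    False := by
  have hD : (4 * X^3 * (C a1 * X + C a0) + X^4 * C a1
      + 4 * (X + C c)^3 * (C b1 * X + C b0) + (X + C c)^4 * C b1
      + 4 * (X + C d)^3 * (C e1' * X + C e0') + (X + C d)^4 * C e1' : Polynomial k) = 0 := by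
    have h := congrArg derivative E
    simp only [derivative_add, derivative_mul, derivative_pow, derivative_X, derivative_C,
      derivative_zero, derivative_one, Nat.cast_ofNat, map_ofNat] at h
    linear_combination h
  have e1 := congrArg (Polynomial.eval (0:k)) E
  have e2 := congrArg (Polynomial.eval (-c)) E
  have e3 := congrArg (Polynomial.eval (-d)) E
  have e4 := congrArg (Polynomial.eval (0:k)) hD
  have e5 := congrArg (Polynomial.eval (-c)) hD
  have e6 := congrArg (Polynomial.eval (-d)) hD
  simp only [eval_add, eval_mul, eval_pow, eval_X, eval_C, eval_zero, eval_ofNat]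
    at e1 e2 e3 e4 e5 e6
  have hdet : ((20:k) * c^8 * d^8 * (c-d)^8) ≠ 0 :=
    mul_ne_zero (mul_ne_zero (mul_ne_zero (by norm_num) (pow_ne_zero _ hc)) (pow_ne_zero _ hd))
      (pow_ne_zero _ (sub_ne_zero.2 hcd))
  have k1 : (20:k) * c^8 * d^8 * (c-d)^8 * a1 = 0 := by
    linear_combination ((40:k)*c^5*d^14 + (-280:k)*c^6*d^13 + (840:k)*c^7*d^12 + (-1400:k)*c^8*d^11 + (1400:k)*c^9*d^10 + (-840:k)*c^10*d^9 + (280:k)*c^11*d^8 + (-40:k)*c^12*d^7) * e2 + ((-40:k)*c^7*d^12 + (280:k)*c^8*d^11 + (-840:k)*c^9*d^10 + (1400:k)*c^10*d^9 + (-1400:k)*c^11*d^8 + (840:k)*c^12*d^7 + (-280:k)*c^13*d^6 + (40:k)*c^14*d^5) * e3 + ((2:k)*c^4*d^16 + (-24:k)*c^5*d^15 + (132:k)*c^6*d^14 + (-440:k)*c^7*d^13 + (990:k)*c^8*d^12 + (-1584:k)*c^9*d^11 + (1848:k)*c^10*d^10 + (-1584:k)*c^11*d^9 + (990:k)*c^12*d^8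 + (-440:k)*c^13*d^7 + (132:k)*c^14*d^6 + (-24:k)*c^15*d^5 + (2:k)*c^16*d^4) * e4 + ((-2:k)*c^4*d^16 + (8:k)*c^5*d^15 + (8:k)*c^6*d^14 + (-112:k)*c^7*d^13 + (308:k)*c^8*d^12 + (-448:k)*c^9*d^11 + (392:k)*c^10*d^10 + (-208:k)*c^11*d^9 + (62:k)*c^12*d^8 + (-8:k)*c^13*d^7) * e5 + ((-8:k)*c^7*d^13 + (62:k)*c^8*d^12 + (-208:k)*c^9*d^11 + (392:k)*c^10*d^10 + (-448:k)*c^11*d^9 + (308:k)*c^12*d^8 + (-112:k)*c^13*d^7 + (8:k)*c^14*d^6 + (8:k)*c^15*d^5 + (-2:k)*c^16*d^4) * e6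
  have k0 : (20:k) * c^8 * d^8 * (c-d)^8 * a0 = 0 := by
    linear_combination ((10:k)*c^4*d^16 + (-120:k)*c^5*d^15 + (660:k)*c^6*d^14 + (-2200:k)*c^7*d^13 + (4950:k)*c^8*d^12 + (-7920:k)*c^9*d^11 + (9240:k)*c^10*d^10 + (-7920:k)*c^11*d^9 + (4950:k)*c^12*d^8 + (-2200:k)*c^13*d^7 + (660:k)*c^14*d^6 + (-120:k)*c^15*d^5 + (10:k)*c^16*d^4) * e1 + ((-10:k)*c^4*d^16 + (120:k)*c^5*d^15 + (-560:k)*c^6*d^14 + (1400:k)*c^7*d^13 + (-2100:k)*c^8*d^12 + (1960:k)*c^9*d^11 + (-1120:k)*c^10*d^10 + (360:k)*c^11*d^9 + (-50:k)*c^12*d^8) * e2 + ((-50:k)*c^8*d^12 + (360:k)*c^9*d^11 + (-1120:k)*c^10*d^10 + (1960:k)*c^11*d^9 + (-2100:k)*c^12*d^8 + (1400:k)*c^13*d^7 + (-560:k)*c^14*d^6 + (120:k)*c^15*d^5 + (-10:k)*c^16*d^4) * e3 + ((-10:k)*c^5*d^16 + (80:k)*c^6*d^15 + (-280:k)*c^7*d^14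 + (560:k)*c^8*d^13 + (-700:k)*c^9*d^12 + (560:k)*c^10*d^11 + (-280:k)*c^11*d^10 + (80:k)*c^12*d^9 + (-10:k)*c^13*d^8) * e5 + ((-10:k)*c^8*d^13 + (80:k)*c^9*d^12 + (-280:k)*c^10*d^11 + (560:k)*c^11*d^10 + (-700:k)*c^12*d^9 + (560:k)*c^13*d^8 + (-280:k)*c^14*d^7 + (80:k)*c^15*d^6 + (-10:k)*c^16*d^5) * e6
  exact hf ⟨(mul_eq_zero.1 k1).resolve_left hdet, (mul_eq_zero.1 k0).resolve_left hdet⟩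

lemma oneVar {k : Type*} [Field k] [CharZero k] {c d : k} (hc : c ≠ 0) (hd : d ≠ 0)
    (hcd : c ≠ d) {F G H : Polynomial k} (hF : F ≠ 0) (hG : G ≠ 0) (hH : H ≠ 0)
    {r t u α : ℕ} (hα : 2 ≤ α)
    (hdF : r + F.natDegree ≤ α) (hdG : t + G.natDegree ≤ α) (hdH : u + H.natDegree ≤ α)
    (E : X ^ r * F + (X + C c) ^ t * G + (X + C d) ^ u * H = 0) :
    4 * min (min r t) u ≤ 3 * α := by
  by_contra hcon
  push_neg at hcon
  have hm1 : min (min r t) u ≤ r := le_trans (min_le_left _ _) (min_le_left _ _)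
  have hm2 : min (min r t) u ≤ t := le_trans (min_le_left _ _) (min_le_right _ _)
  have hm3 : min (min r t) u ≤ u := min_le_right _ _
  have h4r : 3 * α + 1 ≤ 4 * r := by omega
  have h4t : 3 * α + 1 ≤ 4 * t := by omega
  have h4u : 3 * α + 1 ≤ 4 * u := by omega
  rcases sum_bound hc hd hcd hF hG hH hdF hdG hdH E with hsum | hrt
  · have hα5 : α ≤ 5 := by omega
    interval_cases α
    · -- α = 2
      obtain rfl : r = 2 := by omega
      obtain rfl : t = 2 := by omega
      obtain rfl : u = 2 := by omega
      have hFC : F = C (F.coeff 0) := Polynomial.eq_C_of_natDegree_le_zero (by omega)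
      have hGC : G = C (G.coeff 0) := Polynomial.eq_C_of_natDegree_le_zero (by omega)
      have hHC : H = C (H.coeff 0) := Polynomial.eq_C_of_natDegree_le_zero (by omega)
      have hf0 : F.coeff 0 ≠ 0 := fun h => hF (by rw [hFC, h, map_zero])
      rw [hFC, hGC, hHC] at E
      exact lin2 hc hd hcd hf0 E
    · omega
    · omega
    · -- α = 5
      obtain rfl : r = 4 := by omega
      obtain rfl : t = 4 := by omega
      obtain rfl : u = 4 := by omega
      have hFC : F = C (F.coeff 1) * X + C (F.coeff 0) :=
        Polynomial.eq_X_add_C_of_natDegree_le_one (by omega)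
      have hGC : G = C (G.coeff 1) * X + C (G.coeff 0) :=
        Polynomial.eq_X_add_C_of_natDegree_le_one (by omega)
      have hHC : H = C (H.coeff 1) * X + C (H.coeff 0) :=
        Polynomial.eq_X_add_C_of_natDegree_le_one (by omega)
      have hf0 : ¬(F.coeff 1 = 0 ∧ F.coeff 0 = 0) := by
        rintro ⟨h1, h0⟩
        exact hF (by rw [hFC, h1, h0]; simp)
      rw [hFC, hGC, hHC] at E
      exact lin5 hc hd hcd hf0 E
  · omega

lemma weight_fin2 (p : ℕ) (d : Fin 2 →₀ ℕ) :
    (Finsupp.weight ![p, 1]) d = d 0 * p + d 1 := by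
  rw [Finsupp.weight_apply, Finsupp.sum_fintype _ _ (by intro i; simp)]
  simp [Fin.sum_univ_two]

lemma reduce {k : Type*} [Field k] {p n : ℕ} (hp : 1 ≤ p) {S : MvPolynomial (Fin 2) k}
    (hS : S ≠ 0) (h : S.IsWeightedHomogeneous ![p, 1] n) :
    MvPolynomial.aeval (![(X : Polynomial k), 1]) S ≠ 0 ∧
      p * (MvPolynomial.aeval (![(X : Polynomial k), 1]) S).natDegree ≤ n := by
  classical
  have key : ∀ d₀ ∈ S.support,
      (MvPolynomial.aeval (![(X : Polynomial k), 1]) S).coeff (d₀ 0) = MvPolynomial.coeff d₀ S := by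
    intro d₀ hd₀
    rw [MvPolynomial.aeval_def, MvPolynomial.eval₂_eq', Polynomial.finset_sum_coeff,
      Finset.sum_eq_single d₀]
    · simp [Fin.prod_univ_two, Polynomial.coeff_C_mul, Polynomial.coeff_X_pow,
        Polynomial.algebraMap_eq]
    · intro d hd hne
      have hd0 : d 0 ≠ d₀ 0 := by
        intro heq0
        apply hne
        have w1 := h (MvPolynomial.mem_support_iff.1 hd)
        have w2 := h (MvPolynomial.mem_support_iff.1 hd₀)
        rw [weight_fin2] at w1 w2
        rw [heq0] at w1
        have hd1 : d 1 = d₀ 1 := by omega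
        exact Finsupp.ext fun i => by fin_cases i <;> assumption
      simp only [Fin.prod_univ_two, one_pow, mul_one, Polynomial.coeff_C_mul,
        Polynomial.coeff_X_pow, Polynomial.algebraMap_eq, Matrix.cons_val_zero,
        Matrix.cons_val_one, Matrix.head_cons]
      rw [if_neg (fun habs => hd0 habs.symm)]
      simp
    · intro habs
      exact absurd hd₀ habs
  obtain ⟨d₀, hd₀⟩ := (MvPolynomial.support_nonempty.2 hS)
  constructor
  · intro h0
    have := key d₀ hd₀
    rw [h0] at this
    simp only [Polynomial.coeff_zero] at this
    exact (MvPolynomial.mem_support_iff.1 hd₀) this.symm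
  · have hdeg : (MvPolynomial.aeval (![(X : Polynomial k), 1]) S).natDegree ≤ n / p := by
      rw [MvPolynomial.aeval_def, MvPolynomial.eval₂_eq']
      apply Polynomial.natDegree_sum_le_of_forall_le
      intro d hd
      have w1 := h (MvPolynomial.mem_support_iff.1 hd)
      rw [weight_fin2] at w1
      have hle : d 0 ≤ n / p := (Nat.le_div_iff_mul_le hp).2 (by omega)
      simp only [Fin.prod_univ_two, Matrix.cons_val_zero, Matrix.cons_val_one, Matrix.head_cons,
        one_pow, mul_one]
      apply le_trans (Polynomial.natDegree_mul_le)
      simpa [Polynomial.algebraMap_eq, Polynomial.natDegree_X_pow] using hle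
    calc p * (MvPolynomial.aeval (![(X : Polynomial k), 1]) S).natDegree ≤ p * (n / p) :=
          Nat.mul_le_mul_left p hdeg
      _ ≤ n := Nat.mul_div_le n p

end ThreeTermHelpers


open MvPolynomial

/-- Weighted version of the three-term lemma: if `R, T, U` are nonzero weighted homogeneous
polynomials (with `x₂` of weight `p` and `x₃` of weight `1`) with
`deg R + rp = deg T + tp = deg U + up = m`, if
`x₂^r R + (x₂ + c x₃^p)^t T + (x₂ + c' x₃^p)^u U = 0` for distinct nonzero `c, c'`, and if
`m = αp + β` with `β < p` and `α ≥ 2`, then `min {rp, tp, up} ≤ (3/4) m`. -/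
theorem weighted_min_exponent_le (k : Type*) [Field k] [CharZero k]
    (p : ℕ) (hp : 1 ≤ p)
    (R T U : MvPolynomial (Fin 2) k) (hR0 : R ≠ 0) (hT0 : T ≠ 0) (hU0 : U ≠ 0)
    (dR dT dU : ℕ)
    (hR : R.IsWeightedHomogeneous ![p, 1] dR)
    (hT : T.IsWeightedHomogeneous ![p, 1] dT)
    (hU : U.IsWeightedHomogeneous ![p, 1] dU)
    (r t u m : ℕ) (hmR : dR + r * p = m) (hmT : dT + t * p = m) (hmU : dU + u * p = m)
    (c c' : k) (hc : c ≠ 0) (hc' : c' ≠ 0) (hcc' : c ≠ c')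
    (heq : X 0 ^ r * R + (X 0 + C c * X 1 ^ p) ^ t * T
        + (X 0 + C c' * X 1 ^ p) ^ u * U = 0)
    (α β : ℕ) (hm : m = α * p + β) (hβ : β < p) (hα : 2 ≤ α) :
    ((min (min (r * p) (t * p)) (u * p) : ℕ) : ℚ) ≤ 3 / 4 * (m : ℚ) := by
  classical
  obtain ⟨hF0, hFdeg⟩ := reduce hp hR0 hR
  obtain ⟨hG0, hGdeg⟩ := reduce hp hT0 hT
  obtain ⟨hH0, hHdeg⟩ := reduce hp hU0 hU
  set F := MvPolynomial.aeval (![(Polynomial.X : Polynomial k), 1]) R with hF_def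
  set G := MvPolynomial.aeval (![(Polynomial.X : Polynomial k), 1]) T with hG_def
  set H := MvPolynomial.aeval (![(Polynomial.X : Polynomial k), 1]) U with hH_def
  have E : Polynomial.X ^ r * F + (Polynomial.X + Polynomial.C c) ^ t * G
      + (Polynomial.X + Polynomial.C c') ^ u * H = 0 := by
    have h2 := congrArg (MvPolynomial.aeval (![(Polynomial.X : Polynomial k), 1])) heq
    simpa [map_add, map_mul, map_pow, MvPolynomial.aeval_X, Polynomial.algebraMap_eq]
      using h2
  have hbound : ∀ (s dS degS : ℕ), p * degS ≤ dS → dS + s * p = m → s + degS ≤ α := by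
    intro s dS degS h1 h2
    by_contra hcon
    push_neg at hcon
    have h3 : p * (α + 1) ≤ p * (s + degS) := Nat.mul_le_mul_left p hcon
    rw [Nat.mul_add, Nat.mul_add, Nat.mul_one, Nat.mul_comm p α, Nat.mul_comm p s] at h3
    linarith
  have hdFα := hbound r dR F.natDegree hFdeg hmR
  have hdGα := hbound t dT G.natDegree hGdeg hmT
  have hdHα := hbound u dU H.natDegree hHdeg hmU
  have key := oneVar hc hc' hcc' hF0 hG0 hH0 hα hdFα hdGα hdHα E
  have hminp : min (min (r * p) (t * p)) (u * p) = min (min r t) u * p := by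
    have hmul : ∀ x y : ℕ, min (x * p) (y * p) = min x y * p := by
      intro x y
      rcases le_total x y with h | h
      · rw [min_eq_left (Nat.mul_le_mul_right p h), min_eq_left h]
      · rw [min_eq_right (Nat.mul_le_mul_right p h), min_eq_right h]
    rw [hmul, hmul]
  have hN : 4 * (min (min r t) u * p) ≤ 3 * m := by
    have h1 : 4 * min (min r t) u * p ≤ 3 * α * p := Nat.mul_le_mul_right p key
    have h2 : α * p ≤ m := by omega
    calc 4 * (min (min r t) u * p) = 4 * min (min r t) u * p := by ring
      _ ≤ 3 * α * p := h1
      _ = 3 * (α * p) := by ring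
      _ ≤ 3 * m := Nat.mul_le_mul_left 3 h2
  rw [hminp]
  have hQ : ((min (min r t) u * p : ℕ) : ℚ) * 4 ≤ 3 * (m : ℚ) := by
    have := (Nat.cast_le (α := ℚ)).2 hN
    push_cast at this ⊢
    linarith
  linarith
end

section
/- Let k be a field of characteristic zero, let p ≥ 1 be an integer, and let R, T, U ∈ k[x2,x3] be nonzero weighted homogeneous polynomials for the weights w(x2) = p, w(x3) = 1. Assume there exist natural numbers r, t, u, m such that the weighted degrees satisfy deg R + rp = deg T + tp = deg U + u = m. Suppose that for some nonzero c ∈ k we have x2^r R + (x2 + c x3^p)^t T + x3^u U = 0. Write m = αp + β with 0 ≤ β < p (the Euclidean division of m by p) and assume α ≥ 2. Then min{rp, tp, u} < (4/5)·m. -/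
open MvPolynomial

section helpers

open Polynomial UniqueFactorizationMonoid

private lemma wh_support {k : Type*} [Field k] {p n : ℕ} {F : MvPolynomial (Fin 2) k}
    (hF : F.IsWeightedHomogeneous ![p, 1] n) {d : Fin 2 →₀ ℕ} (hd : d ∈ F.support) :
    d 0 * p + d 1 = n := by
  have h := hF (MvPolynomial.mem_support_iff.mp hd)
  rw [Finsupp.weight_apply, Finsupp.sum_fintype] at h
  · simpa [Fin.sum_univ_two, smul_eq_mul] using h
  · intro i; simp

private lemma phi_coeff {k : Type*} [Field k] (F : MvPolynomial (Fin 2) k) (j : ℕ) :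
    (MvPolynomial.aeval ![Polynomial.X, (1 : Polynomial k)] F).coeff j
      = ∑ e ∈ F.support, if j = e 0 then F.coeff e else 0 := by
  rw [MvPolynomial.aeval_def, MvPolynomial.eval₂_eq', Polynomial.finset_sum_coeff]
  refine Finset.sum_congr rfl fun e _ => ?_
  rw [Fin.prod_univ_two]
  simp only [Matrix.cons_val_zero, Matrix.cons_val_one, Matrix.head_cons, one_pow, mul_one,
    Polynomial.algebraMap_eq, Polynomial.coeff_C_mul, Polynomial.coeff_X_pow]
  split <;> simp

private lemma phi_ne_zero_deg {k : Type*} [Field k] {p n : ℕ} {F : MvPolynomial (Fin 2) k}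
    (hF0 : F ≠ 0) (hF : F.IsWeightedHomogeneous ![p, 1] n) :
    MvPolynomial.aeval ![Polynomial.X, (1 : Polynomial k)] F ≠ 0 ∧
      p * (MvPolynomial.aeval ![Polynomial.X, (1 : Polynomial k)] F).natDegree ≤ n := by
  have hinj : ∀ e ∈ F.support, ∀ d ∈ F.support, e 0 = d 0 → e = d := by
    intro e he d hd h0
    have he' := wh_support hF he
    have hd' := wh_support hF hd
    rw [h0] at he'
    have h1 : e 1 = d 1 := by omega
    ext i
    fin_cases i
    · exact h0
    · exact h1
  obtain ⟨d, hd⟩ : F.support.Nonempty := by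
    rw [Finset.nonempty_iff_ne_empty]
    intro h
    exact hF0 (MvPolynomial.support_eq_empty.mp h)
  have hne : (MvPolynomial.aeval ![Polynomial.X, (1 : Polynomial k)] F).coeff (d 0) ≠ 0 := by
    rw [phi_coeff, Finset.sum_eq_single d]
    · simpa using MvPolynomial.mem_support_iff.mp hd
    · intro e he hed
      rw [if_neg]
      intro h
      exact hed (hinj e he d hd h.symm)
    · intro h; exact absurd hd h
  have hphi : MvPolynomial.aeval ![Polynomial.X, (1 : Polynomial k)] F ≠ 0 := by
    intro h
    rw [h] at hne
    simp at hne
  refine ⟨hphi, ?_⟩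
  have hcN := Polynomial.leadingCoeff_ne_zero.mpr hphi
  rw [Polynomial.leadingCoeff, phi_coeff] at hcN
  obtain ⟨e, he, hne'⟩ := Finset.exists_ne_zero_of_sum_ne_zero hcN
  have h0 : (MvPolynomial.aeval ![Polynomial.X, (1 : Polynomial k)] F).natDegree = e 0 := by
    by_contra hh
    rw [if_neg hh] at hne'
    exact hne' rfl
  rw [h0, mul_comm]
  have := wh_support hF he
  omega

private lemma radical_dvd_radical' {k : Type*} [Field k] [DecidableEq k] {a b : Polynomial k}
    (hb : b ≠ 0) (h : a ∣ b) : radical a ∣ radical b := by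
  have ha : a ≠ 0 := by
    rintro rfl
    exact hb (zero_dvd_iff.mp h)
  have hle := (UniqueFactorizationMonoid.dvd_iff_normalizedFactors_le_normalizedFactors
    ha hb).mp h
  refine Finset.prod_dvd_prod_of_subset _ _ id ?_
  intro x hx
  simp only [UniqueFactorizationMonoid.primeFactors, Multiset.mem_toFinset] at hx ⊢
  exact Multiset.mem_of_le hle hx

private lemma radical_mul_dvd' {k : Type*} [Field k] [DecidableEq k] {a b : Polynomial k}
    (ha : a ≠ 0) (hb : b ≠ 0) : radical (a * b) ∣ radical a * radical b := by
  have h1 : primeFactors (a * b) = primeFactors a ∪ primeFactors b := by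
    ext x
    unfold UniqueFactorizationMonoid.primeFactors
    simp [UniqueFactorizationMonoid.normalizedFactors_mul ha hb]
  show (primeFactors (a * b)).prod id ∣ _
  rw [h1, ← Finset.union_sdiff_self_eq_union, Finset.prod_union Finset.disjoint_sdiff]
  exact mul_dvd_mul dvd_rfl
    (Finset.prod_dvd_prod_of_subset _ _ id (Finset.sdiff_subset))

private lemma radical_X_pow {k : Type*} [Field k] [DecidableEq k] {r : ℕ} (hr : 0 < r) :
    radical ((Polynomial.X : Polynomial k) ^ r) = Polynomial.X := by
  rw [radical_pow _ hr.ne', radical_of_prime Polynomial.prime_X, Polynomial.Monic.normalize_eq_self]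
  exact Polynomial.monic_X

private lemma radical_X_add_C_pow {k : Type*} [Field k] [DecidableEq k] {t : ℕ} (ht : 0 < t)
    (c : k) : radical ((Polynomial.X + Polynomial.C c) ^ t) = Polynomial.X + Polynomial.C c := by
  have hprime : Prime (Polynomial.X + Polynomial.C c) := by
    have := Polynomial.prime_X_sub_C (-c)
    rwa [map_neg, sub_neg_eq_add] at this
  rw [radical_pow _ ht.ne', radical_of_prime hprime, Polynomial.Monic.normalize_eq_self]
  exact Polynomial.monic_X_add_C c

private lemma arith_contra (p m x1 x2 x3 x4 x5 u : ℕ) (hp : 1 ≤ p)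
    (h1 : x3 + x1 ≤ m) (h2 : x4 + x2 ≤ m) (h3 : x5 + u ≤ m)
    (h4 : x1 ≤ p + x4 + x5) (h5 : x2 ≤ p + x3 + x5)
    (h6 : 4 * m ≤ 5 * x1) (h7 : 4 * m ≤ 5 * x2) (h8 : 4 * m ≤ 5 * u)
    (h9 : 2 * p ≤ m)
    (h10 : x3 = 0 ∨ p ≤ x3) (h11 : x4 = 0 ∨ p ≤ x4) (h12 : x5 = 0 ∨ p ≤ x5) : False := by
  omega

end helpers

/-- Second weighted version of the three-term lemma: if `R, T, U` are nonzero weighted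
homogeneous polynomials (with `x₂` of weight `p` and `x₃` of weight `1`) with
`deg R + rp = deg T + tp = deg U + u = m`, if
`x₂^r R + (x₂ + c x₃^p)^t T + x₃^u U = 0` for some nonzero `c`, and if `m = αp + β` with
`β < p` and `α ≥ 2`, then `min {rp, tp, u} < (4/5) m`. -/
theorem weighted_min_exponent_lt (k : Type*) [Field k] [CharZero k]
    (p : ℕ) (hp : 1 ≤ p)
    (R T U : MvPolynomial (Fin 2) k) (hR0 : R ≠ 0) (hT0 : T ≠ 0) (hU0 : U ≠ 0)
    (dR dT dU : ℕ)
    (hR : R.IsWeightedHomogeneous ![p, 1] dR)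
    (hT : T.IsWeightedHomogeneous ![p, 1] dT)
    (hU : U.IsWeightedHomogeneous ![p, 1] dU)
    (r t u m : ℕ) (hmR : dR + r * p = m) (hmT : dT + t * p = m) (hmU : dU + u = m)
    (c : k) (hc : c ≠ 0)
    (heq : X 0 ^ r * R + (X 0 + C c * X 1 ^ p) ^ t * T + X 1 ^ u * U = 0)
    (α β : ℕ) (hm : m = α * p + β) (hβ : β < p) (hα : 2 ≤ α) :
    ((min (min (r * p) (t * p)) u : ℕ) : ℚ) < 4 / 5 * (m : ℚ) := by
  classical
  by_contra hcon
  push_neg at hcon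
  have hq : (4 * m : ℚ) ≤ 5 * ((min (min (r * p) (t * p)) u : ℕ) : ℚ) := by linarith
  have hmin : 4 * m ≤ 5 * min (min (r * p) (t * p)) u := by exact_mod_cast hq
  have hA4 : 4 * m ≤ 5 * (r * p) :=
    hmin.trans (Nat.mul_le_mul_left 5 ((min_le_left _ _).trans (min_le_left _ _)))
  have hB4 : 4 * m ≤ 5 * (t * p) :=
    hmin.trans (Nat.mul_le_mul_left 5 ((min_le_left _ _).trans (min_le_right _ _)))
  have hU4 : 4 * m ≤ 5 * u := hmin.trans (Nat.mul_le_mul_left 5 (min_le_right _ _))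
  have hm2 : 2 * p ≤ m := hm ▸ le_add_of_le_of_nonneg (Nat.mul_le_mul_right p hα) (Nat.zero_le β)
  have hm0 : 0 < m := by omega
  obtain ⟨hRne, hRdeg⟩ := phi_ne_zero_deg hR0 hR
  obtain ⟨hTne, hTdeg⟩ := phi_ne_zero_deg hT0 hT
  obtain ⟨hUne, hUdeg⟩ := phi_ne_zero_deg hU0 hU
  have heq' : Polynomial.X ^ r * MvPolynomial.aeval ![Polynomial.X, (1 : Polynomial k)] R
      + (Polynomial.X + Polynomial.C c) ^ t
        * MvPolynomial.aeval ![Polynomial.X, (1 : Polynomial k)] T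
      + MvPolynomial.aeval ![Polynomial.X, (1 : Polynomial k)] U = 0 := by
    have h := congrArg (MvPolynomial.aeval ![Polynomial.X, (1 : Polynomial k)]) heq
    simpa [map_add, map_mul, map_pow, MvPolynomial.aeval_X, Matrix.cons_val_zero,
      Matrix.cons_val_one, Matrix.head_cons, MvPolynomial.aeval_C, Polynomial.algebraMap_eq,
      one_pow, mul_one] using h
  set Rp := MvPolynomial.aeval ![Polynomial.X, (1 : Polynomial k)] R with hRpdef
  set Tp := MvPolynomial.aeval ![Polynomial.X, (1 : Polynomial k)] T with hTpdef
  set Up := MvPolynomial.aeval ![Polynomial.X, (1 : Polynomial k)] U with hUpdef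
  have hr1 : 0 < r := by
    rcases Nat.eq_zero_or_pos r with h | h
    · exfalso; rw [h, Nat.zero_mul, Nat.mul_zero] at hA4; omega
    · exact h
  have ht1 : 0 < t := by
    rcases Nat.eq_zero_or_pos t with h | h
    · exfalso; rw [h, Nat.zero_mul, Nat.mul_zero] at hB4; omega
    · exact h
  set a := Polynomial.X ^ r * Rp with hadef
  set b := (Polynomial.X + Polynomial.C c) ^ t * Tp with hbdef
  have hXaddC : (Polynomial.X + Polynomial.C c : Polynomial k) ≠ 0 :=
    (Polynomial.monic_X_add_C c).ne_zero
  have ha0 : a ≠ 0 := mul_ne_zero (pow_ne_zero _ Polynomial.X_ne_zero) hRne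
  have hb0 : b ≠ 0 := mul_ne_zero (pow_ne_zero _ hXaddC) hTne
  have hna : a.natDegree = r + Rp.natDegree := by
    rw [hadef, Polynomial.natDegree_mul (pow_ne_zero _ Polynomial.X_ne_zero) hRne,
      Polynomial.natDegree_X_pow]
  have hnb : b.natDegree = t + Tp.natDegree := by
    rw [hbdef, Polynomial.natDegree_mul (pow_ne_zero _ hXaddC) hTne, Polynomial.natDegree_pow,
      Polynomial.natDegree_X_add_C, mul_one]
  set g := GCDMonoid.gcd a b with hgdef
  have hg0 : g ≠ 0 := gcd_ne_zero_of_left ha0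
  have hga : g ∣ a := gcd_dvd_left a b
  have hgb : g ∣ b := gcd_dvd_right a b
  have hgc : g ∣ Up := by
    have h : Up = -(a + b) := by linear_combination heq'
    rw [h]
    exact dvd_neg.mpr (dvd_add hga hgb)
  set A := a / g with hAdef
  set B := b / g with hBdef
  set Cq := Up / g with hCqdef
  have hAg : g * A = a := EuclideanDomain.mul_div_cancel' hg0 hga
  have hBg : g * B = b := EuclideanDomain.mul_div_cancel' hg0 hgb
  have hCg : g * Cq = Up := EuclideanDomain.mul_div_cancel' hg0 hgc
  have hA0 : A ≠ 0 := fun h => ha0 (by rw [← hAg, h, mul_zero])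
  have hB0 : B ≠ 0 := fun h => hb0 (by rw [← hBg, h, mul_zero])
  have hC0 : Cq ≠ 0 := fun h => hUne (by rw [← hCg, h, mul_zero])
  have hAB : IsCoprime A B := isCoprime_div_gcd_div_gcd (p := a) hb0
  have hsum : A + B + Cq = 0 := by
    apply mul_left_cancel₀ hg0
    rw [mul_add, mul_add, hAg, hBg, hCg, mul_zero]
    exact heq'
  have hBC : IsCoprime B Cq := by
    have h1 : IsCoprime B (A + B * 1) := hAB.symm.add_mul_left_right 1
    rw [mul_one] at h1
    have h2 : Cq = -(A + B) := by linear_combination hsum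
    rw [h2]; exact h1.neg_right
  have hCA : IsCoprime Cq A := by
    have h1 : IsCoprime A (B + A * 1) := hAB.add_mul_left_right 1
    rw [mul_one] at h1
    have h2 : Cq = -(B + A) := by linear_combination hsum
    rw [h2]; exact h1.neg_right.symm
  have hdega : A.natDegree + g.natDegree = r + Rp.natDegree := by
    rw [← hna, ← hAg, Polynomial.natDegree_mul hg0 hA0]; ring
  have hdegb : B.natDegree + g.natDegree = t + Tp.natDegree := by
    rw [← hnb, ← hBg, Polynomial.natDegree_mul hg0 hB0]; ring
  have hdegc : Cq.natDegree + g.natDegree = Up.natDegree := by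
    rw [← hCg, Polynomial.natDegree_mul hg0 hC0]; ring
  have hrp_comm : ∀ x y : ℕ, x * y = y * x := fun x y => Nat.mul_comm x y
  rcases Polynomial.abc hA0 hB0 hC0 hAB hsum with ⟨k1, k2, -⟩ | ⟨kA, -, -⟩
  · -- Mason branch
    have hABCq : IsCoprime (A * B) Cq := IsCoprime.mul_left hCA.symm hBC
    have hradbound : (UniqueFactorizationMonoid.radical (A * B * Cq)).natDegree
        ≤ 2 + Rp.natDegree + Tp.natDegree + Cq.natDegree := by
      rw [UniqueFactorizationMonoid.radical_mul hABCq.isRelPrime,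
        UniqueFactorizationMonoid.radical_mul hAB.isRelPrime]
      have bA : (UniqueFactorizationMonoid.radical A).natDegree ≤ 1 + Rp.natDegree := by
        have d1 : UniqueFactorizationMonoid.radical A ∣ UniqueFactorizationMonoid.radical a :=
          radical_dvd_radical' ha0 ⟨g, by rw [← hAg]; ring⟩
        have d2 : UniqueFactorizationMonoid.radical a
            ∣ Polynomial.X * UniqueFactorizationMonoid.radical Rp := by
          have h := radical_mul_dvd' (pow_ne_zero r (Polynomial.X_ne_zero (R := k))) hRne
          rwa [radical_X_pow hr1] at h
        have hne : Polynomial.X * UniqueFactorizationMonoid.radical Rp ≠ 0 :=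
          mul_ne_zero Polynomial.X_ne_zero (UniqueFactorizationMonoid.radical_ne_zero (a := Rp))
        have h3 := Polynomial.natDegree_le_of_dvd (d1.trans d2) hne
        have h4 : (UniqueFactorizationMonoid.radical Rp).natDegree ≤ Rp.natDegree :=
          Polynomial.natDegree_le_of_dvd (UniqueFactorizationMonoid.radical_dvd_self (a := Rp)) hRne
        rw [Polynomial.natDegree_mul Polynomial.X_ne_zero
          (UniqueFactorizationMonoid.radical_ne_zero (a := Rp)), Polynomial.natDegree_X] at h3
        omega
      have bB : (UniqueFactorizationMonoid.radical B).natDegree ≤ 1 + Tp.natDegree := by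
        have d1 : UniqueFactorizationMonoid.radical B ∣ UniqueFactorizationMonoid.radical b :=
          radical_dvd_radical' hb0 ⟨g, by rw [← hBg]; ring⟩
        have d2 : UniqueFactorizationMonoid.radical b
            ∣ (Polynomial.X + Polynomial.C c) * UniqueFactorizationMonoid.radical Tp := by
          have h := radical_mul_dvd' (pow_ne_zero t hXaddC) hTne
          rwa [radical_X_add_C_pow ht1] at h
        have hne : (Polynomial.X + Polynomial.C c) * UniqueFactorizationMonoid.radical Tp ≠ 0 :=
          mul_ne_zero hXaddC (UniqueFactorizationMonoid.radical_ne_zero (a := Tp))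
        have h3 := Polynomial.natDegree_le_of_dvd (d1.trans d2) hne
        have h4 : (UniqueFactorizationMonoid.radical Tp).natDegree ≤ Tp.natDegree :=
          Polynomial.natDegree_le_of_dvd (UniqueFactorizationMonoid.radical_dvd_self (a := Tp)) hTne
        rw [Polynomial.natDegree_mul hXaddC
          (UniqueFactorizationMonoid.radical_ne_zero (a := Tp)), Polynomial.natDegree_X_add_C] at h3
        omega
      have bC : (UniqueFactorizationMonoid.radical Cq).natDegree ≤ Cq.natDegree :=
        Polynomial.natDegree_le_of_dvd (UniqueFactorizationMonoid.radical_dvd_self (a := Cq)) hC0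
      rw [Polynomial.natDegree_mul (mul_ne_zero (UniqueFactorizationMonoid.radical_ne_zero (a := A))
          (UniqueFactorizationMonoid.radical_ne_zero (a := B)))
          (UniqueFactorizationMonoid.radical_ne_zero (a := Cq)),
        Polynomial.natDegree_mul (UniqueFactorizationMonoid.radical_ne_zero (a := A))
          (UniqueFactorizationMonoid.radical_ne_zero (a := B))]
      omega
    have k1' := k1.trans hradbound
    have k2' := k2.trans hradbound
    have er : r ≤ 1 + Tp.natDegree + Up.natDegree := by omega
    have et : t ≤ 1 + Rp.natDegree + Up.natDegree := by omega
    have erp : r * p ≤ p + p * Tp.natDegree + p * Up.natDegree := by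
      calc r * p = p * r := Nat.mul_comm r p
        _ ≤ p * (1 + Tp.natDegree + Up.natDegree) := Nat.mul_le_mul_left p er
        _ = p + p * Tp.natDegree + p * Up.natDegree := by ring
    have etp : t * p ≤ p + p * Rp.natDegree + p * Up.natDegree := by
      calc t * p = p * t := Nat.mul_comm t p
        _ ≤ p * (1 + Rp.natDegree + Up.natDegree) := Nat.mul_le_mul_left p et
        _ = p + p * Rp.natDegree + p * Up.natDegree := by ring
    have hx3 : p * Rp.natDegree = 0 ∨ p ≤ p * Rp.natDegree := by
      rcases Nat.eq_zero_or_pos Rp.natDegree with h | h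
      · left; rw [h, Nat.mul_zero]
      · right; exact Nat.le_mul_of_pos_right p h
    have hx4 : p * Tp.natDegree = 0 ∨ p ≤ p * Tp.natDegree := by
      rcases Nat.eq_zero_or_pos Tp.natDegree with h | h
      · left; rw [h, Nat.mul_zero]
      · right; exact Nat.le_mul_of_pos_right p h
    have hx5 : p * Up.natDegree = 0 ∨ p ≤ p * Up.natDegree := by
      rcases Nat.eq_zero_or_pos Up.natDegree with h | h
      · left; rw [h, Nat.mul_zero]
      · right; exact Nat.le_mul_of_pos_right p h
    exact arith_contra p m (r * p) (t * p) (p * Rp.natDegree) (p * Tp.natDegree)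
      (p * Up.natDegree) u hp (by omega) (by omega) (by omega) erp etp hA4 hB4 hU4 hm2
      hx3 hx4 hx5
  · -- derivative-zero branch
    have nA0 : A.natDegree = 0 := Polynomial.natDegree_eq_zero_of_derivative_eq_zero kA
    have hδ : g.natDegree ≤ Up.natDegree := Polynomial.natDegree_le_of_dvd hgc hUne
    have hrυ : r ≤ Up.natDegree := by omega
    have hrpυ : r * p ≤ p * Up.natDegree := by
      calc r * p = p * r := Nat.mul_comm r p
        _ ≤ p * Up.natDegree := Nat.mul_le_mul_left p hrυ
    omega
end

section
/- Let G be a group acting on a set Ω and let Z be a finite subset of Ω such that for every u ∈ G the sets Z and u·Z intersect. Then there exists a nonempty finite subset W of the union of the translates u·Z over all u ∈ G that is invariant under G, i.e. g·W = W for every g ∈ G. -/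
open Pointwise

/-- If `G` acts on a set `Ω` and `Z ⊆ Ω` is a finite subset such that `Z` meets every
translate `u • Z`, then some nonempty finite subset of `⋃ u, u • Z` is `G`-invariant. -/
theorem exists_finite_invariant_subset {G Ω : Type*} [Group G] [MulAction G Ω]
    (Z : Set Ω) (hZ : Z.Finite) (h : ∀ u : G, (Z ∩ u • Z).Nonempty) :
    ∃ W : Set Ω, W.Finite ∧ W.Nonempty ∧ W ⊆ (⋃ u : G, u • Z) ∧ ∀ g : G, g • W = W := by
  classical
  -- The family of nonempty subsets of `Z` of the form `u • Z ∩ v • Z`.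
  set C : Set (Set Ω) := {A | A.Nonempty ∧ A ⊆ Z ∧ ∃ u v : G, A = u • Z ∩ v • Z} with hC
  have hCfin : C.Finite := hZ.finite_subsets.subset (fun A hA => hA.2.1)
  have : Finite ↥C := hCfin.to_subtype
  have : Fintype ↥C := Fintype.ofFinite _
  -- index type: pairs (A, B) of members of C
  set ι := ↥C × ↥C with hι
  -- for each pair, a coset representative (if a group element maps B to A)
  have hg : ∀ p : ι, ∃ g : G, (∃ γ : G, γ • (p.2 : Set Ω) = (p.1 : Set Ω)) →
      g • (p.2 : Set Ω) = (p.1 : Set Ω) := by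
    intro p
    by_cases hp : ∃ γ : G, γ • (p.2 : Set Ω) = (p.1 : Set Ω)
    · obtain ⟨γ, hγ⟩ := hp
      exact ⟨γ, fun _ => hγ⟩
    · exact ⟨1, fun hh => absurd hh hp⟩
  choose g hgspec using hg
  set H : ι → Subgroup G := fun p => MulAction.stabilizer G (p.2 : Set Ω) with hH
  -- the cosets cover G
  have hcovers : ⋃ p ∈ (Finset.univ : Finset ι), (g p) • (H p : Set G) = Set.univ := by
    rw [Set.eq_univ_iff_forall]
    intro γ
    have hA : (Z ∩ γ • Z) ∈ C :=
      ⟨h γ, Set.inter_subset_left, 1, γ, by rw [one_smul]⟩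
    have hBne : (γ⁻¹ • Z ∩ Z : Set Ω).Nonempty := by
      obtain ⟨x, hx1, hx2⟩ := h γ
      exact ⟨γ⁻¹ • x, Set.smul_mem_smul_set hx1,
        by rwa [← Set.mem_smul_set_iff_inv_smul_mem]⟩
    have hB : (γ⁻¹ • Z ∩ Z) ∈ C :=
      ⟨hBne, Set.inter_subset_right, γ⁻¹, 1, by rw [one_smul]⟩
    set p : ι := (⟨Z ∩ γ • Z, hA⟩, ⟨γ⁻¹ • Z ∩ Z, hB⟩) with hp
    have hmaps : γ • ((p.2 : Set Ω)) = (p.1 : Set Ω) := by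
      show γ • (γ⁻¹ • Z ∩ Z) = Z ∩ γ • Z
      rw [Set.smul_set_inter, smul_inv_smul, Set.inter_comm]
    have hgp : g p • (p.2 : Set Ω) = (p.1 : Set Ω) := hgspec p ⟨γ, hmaps⟩
    refine Set.mem_biUnion (Finset.mem_univ p) ?_
    rw [Set.mem_smul_set_iff_inv_smul_mem]
    show (g p)⁻¹ * γ ∈ H p
    rw [hH, MulAction.mem_stabilizer_iff, mul_smul, hmaps, ← hgp, inv_smul_smul]
  -- B.H. Neumann: some stabilizer has finite index
  obtain ⟨p, -, hfi⟩ := Subgroup.exists_finiteIndex_of_leftCoset_cover hcovers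
  set B : Set Ω := (p.2 : Set Ω) with hB
  obtain ⟨hBne, hBZ, -⟩ := p.2.2
  -- hence the orbit of B is finite
  have : (H p).FiniteIndex := hfi
  have hquot : Finite (G ⧸ MulAction.stabilizer G B) := Subgroup.finite_quotient_of_finiteIndex (H := MulAction.stabilizer G B)
  have horb : Finite ↥(MulAction.orbit G B) :=
    Finite.of_equiv _ (MulAction.orbitEquivQuotientStabilizer G B).symm
  -- the invariant set
  refine ⟨⋃ u : G, u • B, ?_, ?_, ?_, ?_⟩
  · have : (⋃ u : G, u • B) = ⋃₀ (MulAction.orbit G B) := by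
      ext x
      simp only [Set.mem_iUnion, Set.mem_sUnion, MulAction.mem_orbit_iff]
      constructor
      · rintro ⟨u, hu⟩; exact ⟨u • B, ⟨u, rfl⟩, hu⟩
      · rintro ⟨A, ⟨u, rfl⟩, hx⟩; exact ⟨u, hx⟩
    rw [this]
    refine Set.Finite.sUnion (MulAction.orbit G B).toFinite ?_
    rintro A ⟨u, rfl⟩
    exact (hZ.subset hBZ).smul_set
  · obtain ⟨x, hx⟩ := hBne
    exact ⟨x, Set.mem_iUnion.mpr ⟨1, by rwa [one_smul]⟩⟩
  · refine Set.iUnion_subset fun u => ?_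
    exact (Set.smul_set_mono hBZ).trans (Set.subset_iUnion (fun u : G => u • Z) u)
  · intro γ
    have key : ∀ δ : G, δ • (⋃ u : G, u • B) ⊆ ⋃ u : G, u • B := by
      intro δ x hx
      rw [Set.mem_smul_set] at hx
      obtain ⟨y, hy, rfl⟩ := hx
      rw [Set.mem_iUnion] at hy
      obtain ⟨u, hu⟩ := hy
      exact Set.mem_iUnion.mpr ⟨δ * u, by rw [mul_smul]; exact Set.smul_mem_smul_set hu⟩
    refine subset_antisymm (key γ) ?_
    have := Set.smul_set_mono (a := γ) (key γ⁻¹)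
    rwa [smul_inv_smul] at this
end

section
/- Let n, m be positive integers and let G be a group. Suppose that every finitely generated subgroup H of G either contains a nonabelian free subgroup, or contains a solvable subgroup of derived length at most m whose index in H is at most n. Then G satisfies the strong Tits alternative: every subgroup of G either contains a nonabelian free subgroup or contains a solvable subgroup of finite index. -/
/-- A group contains a nonabelian free subgroup if it has a subgroup isomorphic to the
free group on two generators. -/
def ContainsNonabelianFree (G : Type*) [Group G] : Prop :=
  ∃ K : Subgroup G, Nonempty (↥K ≃* FreeGroup (Fin 2))

/-- A group is virtually solvable if it contains a solvable subgroup of finite index. -/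
def IsVirtuallySolvable (G : Type*) [Group G] : Prop :=
  ∃ K : Subgroup G, K.FiniteIndex ∧ IsSolvable ↥K

/-- A group satisfies the strong Tits alternative if every subgroup contains a nonabelian
free subgroup or is virtually solvable. -/
def StrongTitsAlternative (G : Type*) [Group G] : Prop :=
  ∀ H : Subgroup G, ContainsNonabelianFree ↥H ∨ IsVirtuallySolvable ↥H

section Aux

open Subgroup

lemma derived_bot_of_injective {A B : Type*} [Group A] [Group B] (f : A →* B)
    (hf : Function.Injective f) {m : ℕ} (hB : derivedSeries B m = ⊥) :
    derivedSeries A m = ⊥ := by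
  have h1 := map_derivedSeries_le_derivedSeries f m
  rw [hB, le_bot_iff, Subgroup.map_eq_bot_iff, f.ker_eq_bot_iff.mpr hf, le_bot_iff] at h1
  exact h1

lemma derived_bot_of_le {G : Type*} [Group G] {A B : Subgroup G} (hAB : A ≤ B) {m : ℕ}
    (hB : derivedSeries ↥B m = ⊥) : derivedSeries ↥A m = ⊥ :=
  derived_bot_of_injective (Subgroup.inclusion hAB) (Subgroup.inclusion_injective hAB) hB

lemma mapSubtype_derived_mono {G : Type*} [Group G] {L₁ L₂ : Subgroup G} (h : L₁ ≤ L₂) (k : ℕ) :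
    (derivedSeries ↥L₁ k).map L₁.subtype ≤ (derivedSeries ↥L₂ k).map L₂.subtype := by
  have h1 := map_derivedSeries_le_derivedSeries (Subgroup.inclusion h) k
  have h2 := Subgroup.map_mono (f := L₂.subtype) h1
  rwa [Subgroup.map_map, Subgroup.subtype_comp_inclusion] at h2

lemma fg_sup' {G : Type*} [Group G] {A B : Subgroup G} (hA : A.FG) (hB : B.FG) : (A ⊔ B).FG := by
  classical
  obtain ⟨s, hs⟩ := hA
  obtain ⟨t, ht⟩ := hB
  exact ⟨s ∪ t, by rw [Finset.coe_union, Subgroup.closure_union, hs, ht]⟩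

lemma exists_fg_of_mem_derivedSeries {G : Type*} [Group G] (k : ℕ) :
    ∀ x ∈ derivedSeries G k, ∃ L : Subgroup G, L.FG ∧ x ∈ (derivedSeries ↥L k).map L.subtype := by
  induction k with
  | zero =>
    intro x _
    exact ⟨Subgroup.closure {x}, ⟨{x}, by simp⟩,
      ⟨⟨x, Subgroup.mem_closure_singleton_self x⟩, Subgroup.mem_top _, rfl⟩⟩
  | succ k ih =>
    intro x hx
    rw [derivedSeries_succ, Subgroup.commutator_def] at hx
    induction hx using Subgroup.closure_induction with
    | mem y hy =>
      obtain ⟨a, ha, b, hb, rfl⟩ := hy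
      obtain ⟨La, hLa, ha'⟩ := ih a ha
      obtain ⟨Lb, hLb, hb'⟩ := ih b hb
      refine ⟨La ⊔ Lb, fg_sup' hLa hLb, ?_⟩
      have ha2 := mapSubtype_derived_mono (le_sup_left : La ≤ La ⊔ Lb) k ha'
      have hb2 := mapSubtype_derived_mono (le_sup_right : Lb ≤ La ⊔ Lb) k hb'
      rw [derivedSeries_succ, Subgroup.map_commutator]
      exact Subgroup.commutator_mem_commutator ha2 hb2
    | one => exact ⟨⊥, ⟨∅, by simp⟩, one_mem _⟩
    | mul y z hy hz iy iz =>
      obtain ⟨Ly, hy1, hy2⟩ := iy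
      obtain ⟨Lz, hz1, hz2⟩ := iz
      exact ⟨Ly ⊔ Lz, fg_sup' hy1 hz1,
        mul_mem (mapSubtype_derived_mono le_sup_left _ hy2)
          (mapSubtype_derived_mono le_sup_right _ hz2)⟩
    | inv y hy iy =>
      obtain ⟨Ly, hy1, hy2⟩ := iy
      exact ⟨Ly, hy1, inv_mem hy2⟩

lemma containsNonabelianFree_of_subgroup {A : Type*} [Group A] (B : Subgroup A)
    (hB : ContainsNonabelianFree ↥B) : ContainsNonabelianFree A := by
  obtain ⟨K, ⟨e⟩⟩ := hB
  exact ⟨K.map B.subtype,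
    ⟨((Subgroup.equivMapOfInjective K B.subtype B.subtype_injective).symm.trans e)⟩⟩

lemma containsNonabelianFree_congr {A B : Type*} [Group A] [Group B] (e : A ≃* B)
    (hB : ContainsNonabelianFree B) : ContainsNonabelianFree A := by
  obtain ⟨K, ⟨i⟩⟩ := hB
  exact ⟨K.map e.symm.toMonoidHom, ⟨((e.symm.subgroupMap K).symm.trans i)⟩⟩

/-- Main lemma: if every finitely generated subgroup of `G` has a subgroup of index at most
`n` (and positive index) whose `m`-th derived subgroup is trivial, then `G` is virtually
solvable. -/
lemma virtuallySolvable_of_fg_bound {G : Type*} [Group G] (n m : ℕ)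
    (h : ∀ K : Subgroup G, K.FG →
      ∃ S : Subgroup ↥K, S.index ≠ 0 ∧ S.index ≤ n ∧ derivedSeries ↥S m = ⊥) :
    IsVirtuallySolvable G := by
  classical
  choose S h1 h2 h3 using h
  -- The directed set of finitely generated subgroups.
  let J := {K : Subgroup G // K.FG}
  letI : SemilatticeSup J := Subtype.semilatticeSup (fun _ _ hA hB => fg_sup' hA hB)
  haveI : Nonempty J := ⟨⟨⊥, ⟨∅, by simp⟩⟩⟩
  haveI : (Filter.atTop : Filter J).NeBot := Filter.atTop_neBot
  let U : Ultrafilter J := Ultrafilter.of Filter.atTop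
  have hU : ∀ K : J, {K' : J | K ≤ K'} ∈ U :=
    fun K => Ultrafilter.of_le Filter.atTop (Filter.mem_atTop K)
  -- the limit predicate
  let p : G → J → Prop := fun x K => ∃ hx : x ∈ K.1, (⟨x, hx⟩ : ↥K.1) ∈ S K.1 K.2
  let N : Subgroup G :=
    { carrier := {x | {K | p x K} ∈ U}
      one_mem' := by
        have : ∀ K : J, p 1 K := fun K => ⟨one_mem _, one_mem _⟩
        exact Filter.mem_of_superset Filter.univ_mem fun K _ => this K
      mul_mem' := by
        intro a b ha hb
        refine Filter.mem_of_superset (Filter.inter_mem ha hb) ?_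
        rintro K ⟨⟨haK, haS⟩, ⟨hbK, hbS⟩⟩
        refine ⟨mul_mem haK hbK, ?_⟩
        have : (⟨a * b, mul_mem haK hbK⟩ : ↥K.1) = ⟨a, haK⟩ * ⟨b, hbK⟩ := rfl
        rw [this]
        exact mul_mem haS hbS
      inv_mem' := by
        intro a ha
        refine Filter.mem_of_superset ha ?_
        rintro K ⟨haK, haS⟩
        refine ⟨inv_mem haK, ?_⟩
        have : (⟨a⁻¹, inv_mem haK⟩ : ↥K.1) = (⟨a, haK⟩ : ↥K.1)⁻¹ := rfl
        rw [this]
        exact inv_mem haS }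
  have hNmem : ∀ x : G, x ∈ N ↔ {K | p x K} ∈ U := fun x => Iff.rfl
  -- the pigeonhole bound on the index
  have key : ∀ f : Fin (n + 1) → G, ∃ i j : Fin (n + 1), i ≠ j ∧ (f i)⁻¹ * f j ∈ N := by
    intro f
    have hK₀fg : (Subgroup.closure (Set.range f)).FG :=
      ⟨Finset.univ.image f, by rw [Finset.coe_image, Finset.coe_univ, Set.image_univ]⟩
    set K₀ : J := ⟨Subgroup.closure (Set.range f), hK₀fg⟩ with hK₀
    have hf : ∀ i, f i ∈ K₀.1 := fun i => Subgroup.subset_closure (Set.mem_range_self i)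
    set t : Fin (n + 1) × Fin (n + 1) → Set J :=
      fun pr => {K : J | p ((f pr.1)⁻¹ * f pr.2) K} with ht
    have cover : {K : J | K₀ ≤ K} ⊆ ⋃ pr ∈ {pr : Fin (n+1) × Fin (n+1) | pr.1 ≠ pr.2}, t pr := by
      intro K hK
      haveI : Fintype (↥K.1 ⧸ S K.1 K.2) := Subgroup.fintypeOfIndexNeZero (h1 _ _)
      have hcard : Fintype.card (↥K.1 ⧸ S K.1 K.2) < Fintype.card (Fin (n + 1)) := by
        rw [Fintype.card_fin]
        have hle := h2 K.1 K.2
        rw [Subgroup.index_eq_card, Nat.card_eq_fintype_card] at hle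
        omega
      have hKle : K₀.1 ≤ K.1 := hK
      obtain ⟨i, j, hij, he⟩ := Fintype.exists_ne_map_eq_of_card_lt
        (fun i : Fin (n + 1) => QuotientGroup.mk (s := S K.1 K.2) ⟨f i, hKle (hf i)⟩) hcard
      have hmem : ((⟨f i, hKle (hf i)⟩ : ↥K.1))⁻¹ * ⟨f j, hKle (hf j)⟩ ∈ S K.1 K.2 :=
        (QuotientGroup.eq).mp he
      refine Set.mem_biUnion (show (i, j) ∈ {pr : Fin (n+1) × Fin (n+1) | pr.1 ≠ pr.2} from hij) ?_
      refine ⟨mul_mem (inv_mem (hKle (hf i))) (hKle (hf j)), ?_⟩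
      have : (⟨(f i)⁻¹ * f j, mul_mem (inv_mem (hKle (hf i))) (hKle (hf j))⟩ : ↥K.1)
          = (⟨f i, hKle (hf i)⟩ : ↥K.1)⁻¹ * ⟨f j, hKle (hf j)⟩ := rfl
      rw [this]
      exact hmem
    have hUnion : (⋃ pr ∈ {pr : Fin (n+1) × Fin (n+1) | pr.1 ≠ pr.2}, t pr) ∈ U :=
      Filter.mem_of_superset (hU K₀) cover
    obtain ⟨pr, hprne, hpr⟩ :=
      (Ultrafilter.finite_biUnion_mem_iff (Set.toFinite _)).mp hUnion
    exact ⟨pr.1, pr.2, hprne, hpr⟩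
  -- finite index
  have hNfin : Finite (G ⧸ N) := by
    by_contra hinf
    rw [not_finite_iff_infinite] at hinf
    have emb : Function.Injective ((Infinite.natEmbedding (G ⧸ N)) ∘ (Fin.val (n := n + 1))) :=
      (Infinite.natEmbedding (G ⧸ N)).injective.comp Fin.val_injective
    set q : Fin (n + 1) → G ⧸ N := (Infinite.natEmbedding (G ⧸ N)) ∘ Fin.val with hq
    obtain ⟨i, j, hij, hmem⟩ := key (fun i => (q i).out)
    apply hij
    apply emb
    have : q i = q j := by
      have h1' : QuotientGroup.mk (s := N) (q i).out = QuotientGroup.mk (q j).out :=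
        (QuotientGroup.eq).mpr hmem
      rwa [QuotientGroup.out_eq', QuotientGroup.out_eq'] at h1'
    exact this
  haveI : N.FiniteIndex := Subgroup.finiteIndex_of_finite_quotient
  -- solvability
  have hsolv : derivedSeries ↥N m = ⊥ := by
    rw [eq_bot_iff]
    intro x hx
    obtain ⟨L, hLfg, hxL⟩ := exists_fg_of_mem_derivedSeries m x hx
    suffices hL : derivedSeries ↥L m = ⊥ by
      rw [hL, Subgroup.map_bot] at hxL
      exact hxL
    obtain ⟨s, hs⟩ := hLfg
    have hinter : (⋂ y ∈ (s : Set ↥N), {K : J | p (y : G) K}) ∈ U :=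
      (Filter.biInter_mem s.finite_toSet).mpr (fun y _ => y.2)
    obtain ⟨K, hKmem⟩ := Ultrafilter.nonempty_of_mem hinter
    have hK : ∀ y ∈ s, p (y : G) K := fun y hy => Set.mem_iInter₂.mp hKmem y hy
    -- image of S K in G
    have hSK' : derivedSeries ↥((S K.1 K.2).map K.1.subtype) m = ⊥ :=
      derived_bot_of_injective
        (Subgroup.equivMapOfInjective (S K.1 K.2) K.1.subtype K.1.subtype_injective).symm.toMonoidHom
        (Subgroup.equivMapOfInjective (S K.1 K.2) K.1.subtype K.1.subtype_injective).symm.injective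
        (h3 K.1 K.2)
    have hLle : L.map N.subtype ≤ (S K.1 K.2).map K.1.subtype := by
      rw [← hs, MonoidHom.map_closure, Subgroup.closure_le]
      rintro z ⟨y, hy, rfl⟩
      obtain ⟨hyK, hyS⟩ := hK y hy
      exact ⟨⟨(y : G), hyK⟩, hyS, rfl⟩
    have hL' : derivedSeries ↥(L.map N.subtype) m = ⊥ := derived_bot_of_le hLle hSK'
    exact derived_bot_of_injective
      (Subgroup.equivMapOfInjective L N.subtype N.subtype_injective).toMonoidHom
      (Subgroup.equivMapOfInjective L N.subtype N.subtype_injective).injective hL'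
  exact ⟨N, inferInstance, ⟨⟨m, hsolv⟩⟩⟩

end Aux

/-- If every finitely generated subgroup `H` of `G` contains a nonabelian free subgroup or a
solvable subgroup of derived length at most `m` and index at most `n` in `H`, then `G`
satisfies the strong Tits alternative. -/
theorem strongTitsAlternative_of_fg (n m : ℕ) (hn : 0 < n) (hm : 0 < m)
    (G : Type*) [Group G]
    (h : ∀ H : Subgroup G, H.FG →
      ContainsNonabelianFree ↥H ∨
      ∃ S : Subgroup ↥H, S.index ≠ 0 ∧ S.index ≤ n ∧ derivedSeries ↥S m = ⊥) :
    StrongTitsAlternative G := by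
  intro H
  by_cases hfree : ∃ H' : Subgroup ↥H, ContainsNonabelianFree ↥H'
  · obtain ⟨H', hH'⟩ := hfree
    exact Or.inl (containsNonabelianFree_of_subgroup H' hH')
  · push_neg at hfree
    right
    apply virtuallySolvable_of_fg_bound n m
    intro K' hK'fg
    classical
    have hKfg : (K'.map H.subtype).FG := by
      obtain ⟨s, hs⟩ := hK'fg
      exact ⟨s.image H.subtype, by
        rw [Finset.coe_image, ← MonoidHom.map_closure, hs]⟩
    have e : ↥K' ≃* ↥(K'.map H.subtype) :=
      Subgroup.equivMapOfInjective K' H.subtype H.subtype_injective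
    rcases h (K'.map H.subtype) hKfg with hfr | ⟨Sk, hS1, hS2, hS3⟩
    · exact absurd (containsNonabelianFree_congr e hfr) (hfree K')
    · have hker : (e.symm.toMonoidHom).ker ≤ Sk := by
        have hb : (e.symm.toMonoidHom).ker = ⊥ :=
          (MonoidHom.ker_eq_bot_iff _).mpr e.symm.injective
        rw [hb]; exact bot_le
      have hidx : (Sk.map e.symm.toMonoidHom).index = Sk.index :=
        Subgroup.index_map_eq (H := Sk) (f := e.symm.toMonoidHom) e.symm.surjective hker
      refine ⟨Sk.map e.symm.toMonoidHom, ?_, ?_, ?_⟩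
      · rwa [hidx]
      · rwa [hidx]
      · exact derived_bot_of_injective (e.symm.subgroupMap Sk).symm.toMonoidHom
          (e.symm.subgroupMap Sk).symm.injective hS3
end

section
/- Let V = {β ∈ ℝ³ : β1 + β2 + β3 = 0}, a Euclidean plane with the metric induced from ℝ³. For a permutation σ of {1,2,3} and real numbers m, m' ≥ 1, let L(σ, m, m') = {β ∈ V : exp(β_{σ(1)}) = m·exp(β_{σ(2)}) + m'·exp(β_{σ(3)})}. Then for any permutations σ, σ' of {1,2,3} and any real numbers m1, m2, m1', m2' ≥ 1 there exists an isometry of V mapping L(σ, m1, m2) onto L(σ', m1', m2'). -/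
/-- The plane `V = {β ∈ ℝ³ : β₁ + β₂ + β₃ = 0}` with the Euclidean metric induced
from `ℝ³`. -/
def Vplane : Set (EuclideanSpace ℝ (Fin 3)) :=
  {β | β 0 + β 1 + β 2 = 0}

/-- The image in logarithmic coordinates of a non-principal admissible line:
`L(σ, m, m') = {β ∈ V : exp(β_{σ(1)}) = m exp(β_{σ(2)}) + m' exp(β_{σ(3)})}`. -/
def admLine (σ : Equiv.Perm (Fin 3)) (m m' : ℝ) : Set ↥Vplane :=
  {β | Real.exp ((β : EuclideanSpace ℝ (Fin 3)) (σ 0)) =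
    m * Real.exp ((β : EuclideanSpace ℝ (Fin 3)) (σ 1)) +
      m' * Real.exp ((β : EuclideanSpace ℝ (Fin 3)) (σ 2))}

/-- Permute coordinates by `ρ` and translate by `t`. -/
def permTransFun (ρ : Equiv.Perm (Fin 3)) (t : Fin 3 → ℝ)
    (x : EuclideanSpace ℝ (Fin 3)) : EuclideanSpace ℝ (Fin 3) :=
  WithLp.toLp 2 (fun i => x (ρ i) + t i)

lemma permTrans_dist (ρ : Equiv.Perm (Fin 3)) (t : Fin 3 → ℝ)
    (x y : EuclideanSpace ℝ (Fin 3)) :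
    dist (permTransFun ρ t x) (permTransFun ρ t y) = dist x y := by
  rw [EuclideanSpace.dist_eq, EuclideanSpace.dist_eq]
  simp only [permTransFun]
  congr 1
  rw [← Equiv.sum_comp ρ (fun i => dist (x i) (y i) ^ 2)]
  refine Finset.sum_congr rfl fun i _ => ?_
  show dist (x (ρ i) + t i) (y (ρ i) + t i) ^ 2 = _
  rw [dist_add_right]

lemma perm_sum (ρ : Equiv.Perm (Fin 3)) (x : Fin 3 → ℝ) :
    x (ρ 0) + x (ρ 1) + x (ρ 2) = x 0 + x 1 + x 2 := by
  have h := Equiv.sum_comp ρ x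
  simpa [Fin.sum_univ_three] using h

/-- The isometry of `V` given by permuting coordinates by `ρ` and translating by `t`. -/
noncomputable def permTransIso (ρ : Equiv.Perm (Fin 3)) (t : Fin 3 → ℝ)
    (ht : t 0 + t 1 + t 2 = 0) : ↥Vplane ≃ᵢ ↥Vplane where
  toFun β := ⟨permTransFun ρ t (β : EuclideanSpace ℝ (Fin 3)), by
    have hβ : (β : EuclideanSpace ℝ (Fin 3)) 0 + (β : EuclideanSpace ℝ (Fin 3)) 1
        + (β : EuclideanSpace ℝ (Fin 3)) 2 = 0 := β.2
    have hs := perm_sum ρ (β : EuclideanSpace ℝ (Fin 3))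
    simp only [Vplane, Set.mem_setOf_eq]
    show ((β : EuclideanSpace ℝ (Fin 3)) (ρ 0) + t 0)
        + ((β : EuclideanSpace ℝ (Fin 3)) (ρ 1) + t 1)
        + ((β : EuclideanSpace ℝ (Fin 3)) (ρ 2) + t 2) = 0
    linarith⟩
  invFun γ := ⟨WithLp.toLp 2 (fun i => (γ : EuclideanSpace ℝ (Fin 3)) (ρ⁻¹ i) - t (ρ⁻¹ i)), by
    have hγ : (γ : EuclideanSpace ℝ (Fin 3)) 0 + (γ : EuclideanSpace ℝ (Fin 3)) 1
        + (γ : EuclideanSpace ℝ (Fin 3)) 2 = 0 := γ.2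
    have hs := perm_sum ρ⁻¹ (fun i => (γ : EuclideanSpace ℝ (Fin 3)) i - t i)
    simp only [Vplane, Set.mem_setOf_eq]
    show ((γ : EuclideanSpace ℝ (Fin 3)) (ρ⁻¹ 0) - t (ρ⁻¹ 0))
        + ((γ : EuclideanSpace ℝ (Fin 3)) (ρ⁻¹ 1) - t (ρ⁻¹ 1))
        + ((γ : EuclideanSpace ℝ (Fin 3)) (ρ⁻¹ 2) - t (ρ⁻¹ 2)) = 0
    simp only at hs
    linarith⟩
  left_inv β := by
    apply Subtype.ext
    apply PiLp.ext; intro i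
    show (β : EuclideanSpace ℝ (Fin 3)) (ρ (ρ⁻¹ i)) + t (ρ⁻¹ i) - t (ρ⁻¹ i)
        = (β : EuclideanSpace ℝ (Fin 3)) i
    rw [show ρ (ρ⁻¹ i) = i from ρ.apply_symm_apply i]; ring
  right_inv γ := by
    apply Subtype.ext
    apply PiLp.ext; intro i
    show (γ : EuclideanSpace ℝ (Fin 3)) (ρ⁻¹ (ρ i)) - t (ρ⁻¹ (ρ i)) + t i
        = (γ : EuclideanSpace ℝ (Fin 3)) i
    rw [show ρ⁻¹ (ρ i) = i from ρ.symm_apply_apply i]; ring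
  isometry_toFun := Isometry.of_dist_eq fun β γ => by
    rw [Subtype.dist_eq, Subtype.dist_eq]
    exact permTrans_dist ρ t _ _

@[simp] lemma permTransIso_apply_coe (ρ : Equiv.Perm (Fin 3)) (t : Fin 3 → ℝ)
    (ht : t 0 + t 1 + t 2 = 0) (β : ↥Vplane) (i : Fin 3) :
    ((permTransIso ρ t ht β : ↥Vplane) : EuclideanSpace ℝ (Fin 3)) i
      = (β : EuclideanSpace ℝ (Fin 3)) (ρ i) + t i := rfl

/-- Any two non-principal admissible lines are related by an isometry of the plane `V`. -/
theorem exists_isometry_mapping_admLine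
    (σ σ' : Equiv.Perm (Fin 3)) (m₁ m₂ m₁' m₂' : ℝ)
    (hm₁ : 1 ≤ m₁) (hm₂ : 1 ≤ m₂) (hm₁' : 1 ≤ m₁') (hm₂' : 1 ≤ m₂') :
    ∃ φ : ↥Vplane ≃ᵢ ↥Vplane, φ '' admLine σ m₁ m₂ = admLine σ' m₁' m₂' := by
  have p₁ : (0:ℝ) < m₁ := lt_of_lt_of_le one_pos hm₁
  have p₂ : (0:ℝ) < m₂ := lt_of_lt_of_le one_pos hm₂
  have p₁' : (0:ℝ) < m₁' := lt_of_lt_of_le one_pos hm₁'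
  have p₂' : (0:ℝ) < m₂' := lt_of_lt_of_le one_pos hm₂'
  set a : ℝ := Real.log (m₁ / m₁') with ha
  set b : ℝ := Real.log (m₂ / m₂') with hb
  set c : ℝ := (a + b) / 3 with hc
  set w : Fin 3 → ℝ := ![-c, a - c, b - c] with hw
  set t : Fin 3 → ℝ := fun i => w (σ'⁻¹ i) with htdef
  have hw0 : w 0 = -c := rfl
  have hw1 : w 1 = a - c := rfl
  have hw2 : w 2 = b - c := rfl
  have ht : t 0 + t 1 + t 2 = 0 := by
    have := perm_sum σ'⁻¹ w
    simp only [htdef]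
    rw [this, hw0, hw1, hw2]; ring
  set ρ : Equiv.Perm (Fin 3) := σ * σ'⁻¹ with hρdef
  refine ⟨permTransIso ρ t ht, ?_⟩
  have hρ : ∀ j, ρ (σ' j) = σ j := fun j => by
    simp [hρdef, Equiv.Perm.mul_apply]
  have htj : ∀ j, t (σ' j) = w j := fun j => by
    simp [htdef]
  -- exponential facts
  have hW0 : Real.exp (w 0) ≠ 0 := (Real.exp_pos _).ne'
  have h1 : m₁' * Real.exp (w 1) = m₁ * Real.exp (w 0) := by
    rw [hw0, hw1, Real.exp_sub, Real.exp_neg, ha, Real.exp_log (div_pos p₁ p₁')]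
    field_simp
  have h2 : m₂' * Real.exp (w 2) = m₂ * Real.exp (w 0) := by
    rw [hw0, hw2, Real.exp_sub, Real.exp_neg, hb, Real.exp_log (div_pos p₂ p₂')]
    field_simp
  have key : ∀ β : ↥Vplane,
      permTransIso ρ t ht β ∈ admLine σ' m₁' m₂' ↔ β ∈ admLine σ m₁ m₂ := by
    intro β
    have e : ∀ j, ((permTransIso ρ t ht β : ↥Vplane) : EuclideanSpace ℝ (Fin 3)) (σ' j)
        = (β : EuclideanSpace ℝ (Fin 3)) (σ j) + w j := by
      intro j
      rw [permTransIso_apply_coe, hρ j, htj j]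
    simp only [admLine, Set.mem_setOf_eq, e, Real.exp_add]
    set x0 := Real.exp ((β : EuclideanSpace ℝ (Fin 3)) (σ 0))
    set x1 := Real.exp ((β : EuclideanSpace ℝ (Fin 3)) (σ 1))
    set x2 := Real.exp ((β : EuclideanSpace ℝ (Fin 3)) (σ 2))
    constructor
    · intro h
      apply mul_right_cancel₀ hW0
      linear_combination h + x1 * h1 + x2 * h2
    · intro h
      linear_combination Real.exp (w 0) * h - x1 * h1 - x2 * h2
  ext γ
  constructor
  · rintro ⟨β, hβ, rfl⟩
    exact (key β).2 hβ
  · intro hγ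
    refine ⟨(permTransIso ρ t ht).symm γ, (key _).1 ?_, by simp⟩
    simpa using hγ
end
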